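/- arXiv:1308.4092 — 9 statements merged into one kernel-verified Lean document; each statement's English description precedes it below -/
import Mathlib

section
/- For all complex numbers p0, pt, p1, p∞, p0t, p1t, p01 the polynomial identity det G = q01² − 4W holds; in particular, on the Jimbo–Fricke surface W = 0 one has q01² = det G. -/
open Complex

/-- For all complex `p0, pt, p1, p∞, p0t, p1t, p01`, the polynomial identity
`det G = q01² − 4W` holds; in particular on the Jimbo–Fricke surface `W = 0` one has
`q01² = det G`. -/
theorem detG_eq_q01_sq_sub_four_W
    (p0 pt p1 pinf p0t p1t p01 ω0t ω1t ω01 ω4 W q01 : ℂ)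
    (hω0t : ω0t = p0 * pt + p1 * pinf)
    (hω1t : ω1t = pt * p1 + p0 * pinf)
    (hω01 : ω01 = p0 * p1 + pt * pinf)
    (hω4 : ω4 = p0 * pt * p1 * pinf + p0 ^ 2 + pt ^ 2 + p1 ^ 2 + pinf ^ 2)
    (hW : W = p0t * p1t * p01 + p0t ^ 2 + p1t ^ 2 + p01 ^ 2
      - ω0t * p0t - ω1t * p1t - ω01 * p01 + ω4 - 4)
    (hq01 : q01 = 2 * p01 + p0t * p1t - ω01)
    (G : Matrix (Fin 4) (Fin 4) ℂ)
    (hG : G = !![2, -p0, -pt, p1t;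
                 -p0, 2, p0t, -pinf;
                 -pt, p0t, 2, -p1;
                 p1t, -pinf, -p1, 2]) :
    G.det = q01 ^ 2 - 4 * W ∧ (W = 0 → q01 ^ 2 = G.det) := by
  subst hω0t hω1t hω01 hω4 hW hq01 hG
  have h : Matrix.det !![(2:ℂ), -p0, -pt, p1t;
                 -p0, 2, p0t, -pinf;
                 -pt, p0t, 2, -p1;
                 p1t, -pinf, -p1, 2] = (2 * p01 + p0t * p1t - (p0 * p1 + pt * pinf)) ^ 2 -
      4 * (p0t * p1t * p01 + p0t ^ 2 + p1t ^ 2 + p01 ^ 2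
      - (p0 * pt + p1 * pinf) * p0t - (pt * p1 + p0 * pinf) * p1t - (p0 * p1 + pt * pinf) * p01 + (p0 * pt * p1 * pinf + p0 ^ 2 + pt ^ 2 + p1 ^ 2 + pinf ^ 2) - 4) := by
    simp [Matrix.det_succ_row_zero, Fin.sum_univ_succ, Fin.succAbove, show (Fin.castSucc 2 : Fin 4) = 2 from rfl]
    ring
  exact ⟨h, fun hw => by rw [h, hw]; ring⟩
end

section
/- Let θ0, θt, θ1, θ∞, σ0t, σ1t be complex numbers and set pμ = 2cos(2πθμ) for μ ∈ {0,t,1,∞}, p0t = 2cos(2πσ0t), p1t = 2cos(2πσ1t). Denote by M_kk(G) the determinant of the 3×3 submatrix of G obtained by deleting row k and column k. Then M11(G) = −32·∏_{ε,ε'=±1} sin π(θ1 + εθ∞ + ε'σ0t), M22(G) = −32·∏_{ε,ε'=±1} sin π(θt + εθ1 + ε'σ1t), M33(G) = −32·∏_{ε,ε'=±1} sin π(θ0 + εθ∞ + ε'σ1t), and M44(G) = −32·∏_{ε,ε'=±1} sin π(θt + εθ0 + ε'σ0t). -/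
open Complex Real

lemma key (a b c : ℂ) :
    8 - 2*((2*Complex.cos (2*(π:ℂ)*a))^2 + (2*Complex.cos (2*(π:ℂ)*b))^2 + (2*Complex.cos (2*(π:ℂ)*c))^2)
      + 2*((2*Complex.cos (2*(π:ℂ)*a))*(2*Complex.cos (2*(π:ℂ)*b))*(2*Complex.cos (2*(π:ℂ)*c)))
    = -32 * (Complex.sin ((π:ℂ)*(a+b+c)) * Complex.sin ((π:ℂ)*(a+b-c)) *
             Complex.sin ((π:ℂ)*(a-b+c)) * Complex.sin ((π:ℂ)*(a-b-c))) := by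
  have hss : ∀ x y : ℂ, Complex.sin x * Complex.sin y
      = (Complex.cos (x - y) - Complex.cos (x + y)) / 2 := by
    intro x y
    rw [Complex.cos_sub, Complex.cos_add]
    ring
  have e1 : Complex.sin ((π:ℂ)*(a+b+c)) * Complex.sin ((π:ℂ)*(a+b-c))
      = (Complex.cos (2*(π:ℂ)*c) - Complex.cos (2*(π:ℂ)*a + 2*(π:ℂ)*b)) / 2 := by
    rw [hss, show (π:ℂ)*(a+b+c) - (π:ℂ)*(a+b-c) = 2*(π:ℂ)*c by ring,
        show (π:ℂ)*(a+b+c) + (π:ℂ)*(a+b-c) = 2*(π:ℂ)*a + 2*(π:ℂ)*b by ring]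
  have e2 : Complex.sin ((π:ℂ)*(a-b+c)) * Complex.sin ((π:ℂ)*(a-b-c))
      = (Complex.cos (2*(π:ℂ)*c) - Complex.cos (2*(π:ℂ)*a - 2*(π:ℂ)*b)) / 2 := by
    rw [hss, show (π:ℂ)*(a-b+c) - (π:ℂ)*(a-b-c) = 2*(π:ℂ)*c by ring,
        show (π:ℂ)*(a-b+c) + (π:ℂ)*(a-b-c) = 2*(π:ℂ)*a - 2*(π:ℂ)*b by ring]
  rw [show Complex.sin ((π:ℂ)*(a+b+c)) * Complex.sin ((π:ℂ)*(a+b-c)) *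
        Complex.sin ((π:ℂ)*(a-b+c)) * Complex.sin ((π:ℂ)*(a-b-c))
      = (Complex.sin ((π:ℂ)*(a+b+c)) * Complex.sin ((π:ℂ)*(a+b-c))) *
        (Complex.sin ((π:ℂ)*(a-b+c)) * Complex.sin ((π:ℂ)*(a-b-c))) by ring,
     e1, e2, Complex.cos_add, Complex.cos_sub]
  have ha := Complex.sin_sq_add_cos_sq (2*(π:ℂ)*a)
  have hb := Complex.sin_sq_add_cos_sq (2*(π:ℂ)*b)
  linear_combination (-8*(1 - Complex.cos (2*(π:ℂ)*b)^2)) * ha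
    + (-8*Complex.sin (2*(π:ℂ)*a)^2) * hb

/-- trigonometric formulas for the diagonal first minors of the Gram matrix `G`. -/
theorem diagonal_minors_of_G
    (θ0 θt θ1 θinf σ0t σ1t : ℂ) (p0 pt p1 pinf p0t p1t : ℂ)
    (hp0 : p0 = 2 * Complex.cos (2 * (π : ℂ) * θ0))
    (hpt : pt = 2 * Complex.cos (2 * (π : ℂ) * θt))
    (hp1 : p1 = 2 * Complex.cos (2 * (π : ℂ) * θ1))
    (hpinf : pinf = 2 * Complex.cos (2 * (π : ℂ) * θinf))
    (hp0t : p0t = 2 * Complex.cos (2 * (π : ℂ) * σ0t))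
    (hp1t : p1t = 2 * Complex.cos (2 * (π : ℂ) * σ1t))
    (G : Matrix (Fin 4) (Fin 4) ℂ)
    (hG : G = !![2, -p0, -pt, p1t;
                 -p0, 2, p0t, -pinf;
                 -pt, p0t, 2, -p1;
                 p1t, -pinf, -p1, 2]) :
    (G.submatrix (Fin.succAbove (0 : Fin 4)) (Fin.succAbove (0 : Fin 4))).det =
      -32 * (Complex.sin ((π : ℂ) * (θ1 + θinf + σ0t)) *
             Complex.sin ((π : ℂ) * (θ1 + θinf - σ0t)) *
             Complex.sin ((π : ℂ) * (θ1 - θinf + σ0t)) *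
             Complex.sin ((π : ℂ) * (θ1 - θinf - σ0t))) ∧
    (G.submatrix (Fin.succAbove (1 : Fin 4)) (Fin.succAbove (1 : Fin 4))).det =
      -32 * (Complex.sin ((π : ℂ) * (θt + θ1 + σ1t)) *
             Complex.sin ((π : ℂ) * (θt + θ1 - σ1t)) *
             Complex.sin ((π : ℂ) * (θt - θ1 + σ1t)) *
             Complex.sin ((π : ℂ) * (θt - θ1 - σ1t))) ∧
    (G.submatrix (Fin.succAbove (2 : Fin 4)) (Fin.succAbove (2 : Fin 4))).det =
      -32 * (Complex.sin ((π : ℂ) * (θ0 + θinf + σ1t)) *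
             Complex.sin ((π : ℂ) * (θ0 + θinf - σ1t)) *
             Complex.sin ((π : ℂ) * (θ0 - θinf + σ1t)) *
             Complex.sin ((π : ℂ) * (θ0 - θinf - σ1t))) ∧
    (G.submatrix (Fin.succAbove (3 : Fin 4)) (Fin.succAbove (3 : Fin 4))).det =
      -32 * (Complex.sin ((π : ℂ) * (θt + θ0 + σ0t)) *
             Complex.sin ((π : ℂ) * (θt + θ0 - σ0t)) *
             Complex.sin ((π : ℂ) * (θt - θ0 + σ0t)) *
             Complex.sin ((π : ℂ) * (θt - θ0 - σ0t))) := by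
  
  refine ⟨?_, ?_, ?_, ?_⟩
  · have h : (G.submatrix (Fin.succAbove (0 : Fin 4)) (Fin.succAbove (0 : Fin 4))) = !![2, p0t, -pinf; p0t, 2, -p1; -pinf, -p1, 2] := by
      subst hG; ext i j; fin_cases i <;> fin_cases j <;> rfl
    rw [h, Matrix.det_fin_three]
    simp only [Matrix.cons_val_zero, Matrix.cons_val_one, Matrix.head_cons, Matrix.cons_val_two,
      Matrix.tail_cons, Matrix.head_fin_const, Matrix.of_apply, Matrix.cons_val', Matrix.empty_val',
      Matrix.cons_val_fin_one]
    subst hp0 hpt hp1 hpinf hp0t hp1t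
    linear_combination key θ1 θinf σ0t
  · have h : (G.submatrix (Fin.succAbove (1 : Fin 4)) (Fin.succAbove (1 : Fin 4))) = !![2, -pt, p1t; -pt, 2, -p1; p1t, -p1, 2] := by
      subst hG; ext i j; fin_cases i <;> fin_cases j <;> rfl
    rw [h, Matrix.det_fin_three]
    simp only [Matrix.cons_val_zero, Matrix.cons_val_one, Matrix.head_cons, Matrix.cons_val_two,
      Matrix.tail_cons, Matrix.head_fin_const, Matrix.of_apply, Matrix.cons_val', Matrix.empty_val',
      Matrix.cons_val_fin_one]
    subst hp0 hpt hp1 hpinf hp0t hp1t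
    linear_combination key θt θ1 σ1t
  · have h : (G.submatrix (Fin.succAbove (2 : Fin 4)) (Fin.succAbove (2 : Fin 4))) = !![2, -p0, p1t; -p0, 2, -pinf; p1t, -pinf, 2] := by
      subst hG; ext i j; fin_cases i <;> fin_cases j <;> rfl
    rw [h, Matrix.det_fin_three]
    simp only [Matrix.cons_val_zero, Matrix.cons_val_one, Matrix.head_cons, Matrix.cons_val_two,
      Matrix.tail_cons, Matrix.head_fin_const, Matrix.of_apply, Matrix.cons_val', Matrix.empty_val',
      Matrix.cons_val_fin_one]
    subst hp0 hpt hp1 hpinf hp0t hp1t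
    linear_combination key θ0 θinf σ1t
  · have h : (G.submatrix (Fin.succAbove (3 : Fin 4)) (Fin.succAbove (3 : Fin 4))) = !![2, -p0, -pt; -p0, 2, p0t; -pt, p0t, 2] := by
      subst hG; ext i j; fin_cases i <;> fin_cases j <;> rfl
    rw [h, Matrix.det_fin_three]
    simp only [Matrix.cons_val_zero, Matrix.cons_val_one, Matrix.head_cons, Matrix.cons_val_two,
      Matrix.tail_cons, Matrix.head_fin_const, Matrix.of_apply, Matrix.cons_val', Matrix.empty_val',
      Matrix.cons_val_fin_one]
    subst hp0 hpt hp1 hpinf hp0t hp1t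
    linear_combination key θt θ0 σ0t
end

section
/- Let p0, pt, p1, p∞, p0t, p1t, p01 be complex numbers satisfying W = 0. Then the diagonal first minors of G (determinants of the submatrices deleting row k and column k) satisfy M11(G)·M44(G) = 4·(q1t² + q01² − p0t·q1t·q01) and M22(G)·M33(G) = 4·(q0t² + q01² − p1t·q0t·q01). -/
open Complex

/-- on the Jimbo–Fricke surface `W = 0`, products of opposite diagonal first
minors of the Gram matrix `G` are expressed through `q0t`, `q1t`, `q01`. -/
theorem diagonal_minor_products_on_JimboFricke
    (p0 pt p1 pinf p0t p1t p01 ω0t ω1t ω01 ω4 W q0t q1t q01 : ℂ)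
    (hω0t : ω0t = p0 * pt + p1 * pinf)
    (hω1t : ω1t = pt * p1 + p0 * pinf)
    (hω01 : ω01 = p0 * p1 + pt * pinf)
    (hω4 : ω4 = p0 * pt * p1 * pinf + p0 ^ 2 + pt ^ 2 + p1 ^ 2 + pinf ^ 2)
    (hW : W = p0t * p1t * p01 + p0t ^ 2 + p1t ^ 2 + p01 ^ 2
      - ω0t * p0t - ω1t * p1t - ω01 * p01 + ω4 - 4)
    (hWzero : W = 0)
    (hq0t : q0t = 2 * p0t + p1t * p01 - ω0t)
    (hq1t : q1t = 2 * p1t + p0t * p01 - ω1t)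
    (hq01 : q01 = 2 * p01 + p0t * p1t - ω01)
    (G : Matrix (Fin 4) (Fin 4) ℂ)
    (hG : G = !![2, -p0, -pt, p1t;
                 -p0, 2, p0t, -pinf;
                 -pt, p0t, 2, -p1;
                 p1t, -pinf, -p1, 2]) :
    (G.submatrix (Fin.succAbove (0 : Fin 4)) (Fin.succAbove (0 : Fin 4))).det *
      (G.submatrix (Fin.succAbove (3 : Fin 4)) (Fin.succAbove (3 : Fin 4))).det
        = 4 * (q1t ^ 2 + q01 ^ 2 - p0t * q1t * q01) ∧
    (G.submatrix (Fin.succAbove (1 : Fin 4)) (Fin.succAbove (1 : Fin 4))).det *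
      (G.submatrix (Fin.succAbove (2 : Fin 4)) (Fin.succAbove (2 : Fin 4))).det
        = 4 * (q0t ^ 2 + q01 ^ 2 - p1t * q0t * q01) := by
  subst hω0t hω1t hω01 hω4 hW hq0t hq1t hq01 hG
  rw [show ((0:Fin 4).succAbove) = (fun i : Fin 3 => (![1,2,3] : Fin 3 → Fin 4) i) from by
        funext i; fin_cases i <;> rfl,
      show ((1:Fin 4).succAbove) = (fun i : Fin 3 => (![0,2,3] : Fin 3 → Fin 4) i) from by
        funext i; fin_cases i <;> rfl,
      show ((2:Fin 4).succAbove) = (fun i : Fin 3 => (![0,1,3] : Fin 3 → Fin 4) i) from by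
        funext i; fin_cases i <;> rfl,
      show ((3:Fin 4).succAbove) = (fun i : Fin 3 => (![0,1,2] : Fin 3 → Fin 4) i) from by
        funext i; fin_cases i <;> rfl]
  simp only [Matrix.det_fin_three, Matrix.submatrix_apply, Matrix.cons_val',
    Matrix.cons_val_zero, Matrix.cons_val_one, Matrix.head_cons, Matrix.cons_val_two,
    Matrix.tail_cons, Matrix.head_fin_const, Matrix.cons_val_fin_one, Matrix.empty_val',
    Matrix.cons_val_three, Matrix.of_apply]
  constructor
  · linear_combination (4 * p0t ^ 2 - 16) * hWzero
  · linear_combination (4 * p1t ^ 2 - 16) * hWzero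
end

section
/- Let θ0, θt, θ1, θ∞, σ0t, σ1t be complex numbers, set pμ = 2cos(2πθμ), p0t = 2cos(2πσ0t), p1t = 2cos(2πσ1t), and let q be any complex number with q² = det G. Assume D ≠ 0 and define z± = (A ± q)/(2D). Then both z₊ and z₋ satisfy the equation ∏_{k=1}^{4}(1 − z·e^{2πiν_k}) = ∏_{k=1}^{4}(1 − z·e^{2πiλ_k}). -/
open Complex Real

set_option maxHeartbeats 1000000
set_option maxRecDepth 100000

set_option maxHeartbeats 4000000 in
private lemma key_aux2 (a b c d s t : ℂ) (ha : a ≠ 0) (hb : b ≠ 0) (hc : c ≠ 0)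
    (hd : d ≠ 0) (hs : s ≠ 0) (ht : t ≠ 0) :
    (-b*d*s*t + b*c^2*d*s*t - a*c*s*t + a*c*d^2*s*t - a*b*c*d + a*b*c*d*t^2 + a*b*c*d*s^2 -
      a*b*c*d*s^2*t^2 + a*b^2*c*s*t - a*b^2*c*d^2*s*t + a^2*b*d*s*t - a^2*b*c^2*d*s*t)^2
      - 4*(-1*1 + c*d*s - b*d*s*t + b*c*t + a*d*t - a*c*s*t + a*b*s - a*b*c*d)
        *((s*t*a*b*c*d)*(-s*t + c*d*t - b*d + b*c*s + a*d*s - a*c + a*b*t - a*b*c*d*s*t)) =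
      (s*t*a*b*c*d)^2 * (16 - 4*(t+t⁻¹)^2 - 4*(s+s⁻¹)^2 + (s+s⁻¹)^2*(t+t⁻¹)^2 - 4*(d+d⁻¹)^2 + 4*(c+c⁻¹)*(d+d⁻¹)*(s+s⁻¹)
      - 4*(c+c⁻¹)^2 - 2*(b+b⁻¹)*(d+d⁻¹)*(s+s⁻¹)*(t+t⁻¹) + 4*(b+b⁻¹)*(c+c⁻¹)*(t+t⁻¹) - 4*(b+b⁻¹)^2 +
      (b+b⁻¹)^2*(d+d⁻¹)^2 + 4*(a+a⁻¹)*(d+d⁻¹)*(t+t⁻¹) - 2*(a+a⁻¹)*(c+c⁻¹)*(s+s⁻¹)*(t+t⁻¹) +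
      4*(a+a⁻¹)*(b+b⁻¹)*(s+s⁻¹) - 2*(a+a⁻¹)*(b+b⁻¹)*(c+c⁻¹)*(d+d⁻¹) - 4*(a+a⁻¹)^2 +
      (a+a⁻¹)^2*(c+c⁻¹)^2) := by
  have haa : a * a⁻¹ = 1 := mul_inv_cancel₀ ha
  have hbb : b * b⁻¹ = 1 := mul_inv_cancel₀ hb
  have hcc : c * c⁻¹ = 1 := mul_inv_cancel₀ hc
  have hdd : d * d⁻¹ = 1 := mul_inv_cancel₀ hd
  have hss : s * s⁻¹ = 1 := mul_inv_cancel₀ hs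
  have htt : t * t⁻¹ = 1 := mul_inv_cancel₀ ht
  linear_combination (4*b^2*c^2*d^2*s^2*t^2 - b^2*c^2*d^2*s^2*t^2*(c⁻¹)^2 - 2*b^2*c^3*d^2*s^2*t^2*(c⁻¹) -
    b^2*c^4*d^2*s^2*t^2 - 4*a*b^2*c^2*d^2*s^2*t^2*(d⁻¹)*(t⁻¹) +
    2*a*b^2*c^2*d^2*s^2*t^2*(c⁻¹)*(s⁻¹)*(t⁻¹) - 4*a*b^2*c^2*d^2*s^2*t^2*(b⁻¹)*(s⁻¹) +
    2*a*b^2*c^2*d^2*s^2*t^2*(b⁻¹)*(c⁻¹)*(d⁻¹) + 4*a*b^2*c^2*d^2*s^2*t^2*(a⁻¹) -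
    a*b^2*c^2*d^2*s^2*t^2*(a⁻¹)*(c⁻¹)^2 - 4*a*b^2*c^2*d^2*s^2*t^3*(d⁻¹) +
    2*a*b^2*c^2*d^2*s^2*t^3*(c⁻¹)*(s⁻¹) + 2*a*b^2*c^2*d^2*s^3*t^2*(c⁻¹)*(t⁻¹) -
    4*a*b^2*c^2*d^2*s^3*t^2*(b⁻¹) + 2*a*b^2*c^2*d^2*s^3*t^3*(c⁻¹) - 4*a*b^2*c^2*d^3*s^2*t^2*(t⁻¹) +
    2*a*b^2*c^2*d^3*s^2*t^2*(b⁻¹)*(c⁻¹) - 4*a*b^2*c^2*d^3*s^2*t^3 +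
    2*a*b^2*c^3*d^2*s^2*t^2*(s⁻¹)*(t⁻¹) + 2*a*b^2*c^3*d^2*s^2*t^2*(b⁻¹)*(d⁻¹) -
    2*a*b^2*c^3*d^2*s^2*t^2*(a⁻¹)*(c⁻¹) + 2*a*b^2*c^3*d^2*s^2*t^3*(s⁻¹) +
    2*a*b^2*c^3*d^2*s^3*t^2*(t⁻¹) + 2*a*b^2*c^3*d^2*s^3*t^3 + 2*a*b^2*c^3*d^3*s^2*t^2*(b⁻¹) -
    a*b^2*c^4*d^2*s^2*t^2*(a⁻¹) - 4*a*b^3*c^2*d^2*s^2*t^2*(s⁻¹) +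
    2*a*b^3*c^2*d^2*s^2*t^2*(c⁻¹)*(d⁻¹) - 4*a*b^3*c^2*d^2*s^3*t^2 + 2*a*b^3*c^2*d^3*s^2*t^2*(c⁻¹) +
    2*a*b^3*c^3*d^2*s^2*t^2*(d⁻¹) + 2*a*b^3*c^3*d^3*s^2*t^2 + 8*a^2*b^2*c^2*d^2*s^2*t^2 -
    2*a^2*b^2*c^2*d^2*s^2*t^2*(c⁻¹)^2 - 4*a^2*b^2*c^3*d^2*s^2*t^2*(c⁻¹) - 2*a^2*b^2*c^4*d^2*s^2*t^2) * haa +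
    (-4*a*b*c^2*d^2*s^2*t^2*(s⁻¹) + 2*a*b*c^2*d^2*s^2*t^2*(c⁻¹)*(d⁻¹) - 4*a*b*c^2*d^2*s^3*t^2 +
    2*a*b*c^2*d^3*s^2*t^2*(c⁻¹) + 2*a*b*c^3*d^2*s^2*t^2*(d⁻¹) + 2*a*b*c^3*d^3*s^2*t^2 +
    4*a^2*c^2*d^2*s^2*t^2 - a^2*c^2*d^2*s^2*t^2*(d⁻¹)^2 - 2*a^2*c^2*d^3*s^2*t^2*(d⁻¹) -
    a^2*c^2*d^4*s^2*t^2 + 2*a^2*b*c^2*d^2*s^2*t^2*(d⁻¹)*(s⁻¹)*(t⁻¹) -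
    4*a^2*b*c^2*d^2*s^2*t^2*(c⁻¹)*(t⁻¹) + 4*a^2*b*c^2*d^2*s^2*t^2*(b⁻¹) -
    a^2*b*c^2*d^2*s^2*t^2*(b⁻¹)*(d⁻¹)^2 + 2*a^2*b*c^2*d^2*s^2*t^3*(d⁻¹)*(s⁻¹) -
    4*a^2*b*c^2*d^2*s^2*t^3*(c⁻¹) + 2*a^2*b*c^2*d^2*s^3*t^2*(d⁻¹)*(t⁻¹) +
    2*a^2*b*c^2*d^2*s^3*t^3*(d⁻¹) + 2*a^2*b*c^2*d^3*s^2*t^2*(s⁻¹)*(t⁻¹) -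
    2*a^2*b*c^2*d^3*s^2*t^2*(b⁻¹)*(d⁻¹) + 2*a^2*b*c^2*d^3*s^2*t^3*(s⁻¹) +
    2*a^2*b*c^2*d^3*s^3*t^2*(t⁻¹) + 2*a^2*b*c^2*d^3*s^3*t^3 - a^2*b*c^2*d^4*s^2*t^2*(b⁻¹) -
    4*a^2*b*c^3*d^2*s^2*t^2*(t⁻¹) - 4*a^2*b*c^3*d^2*s^2*t^3 + 8*a^2*b^2*c^2*d^2*s^2*t^2 -
    2*a^2*b^2*c^2*d^2*s^2*t^2*(d⁻¹)^2 - 4*a^2*b^2*c^2*d^3*s^2*t^2*(d⁻¹) - 2*a^2*b^2*c^2*d^4*s^2*t^2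
    - 4*a^3*b*c^2*d^2*s^2*t^2*(s⁻¹) + 2*a^3*b*c^2*d^2*s^2*t^2*(c⁻¹)*(d⁻¹) - 4*a^3*b*c^2*d^2*s^3*t^2
    + 2*a^3*b*c^2*d^3*s^2*t^2*(c⁻¹) + 2*a^3*b*c^3*d^2*s^2*t^2*(d⁻¹) + 2*a^3*b*c^3*d^3*s^2*t^2) * hbb +
    (-b^2*d^2*s^2*t^2 - b^2*c*d^2*s^2*t^2*(c⁻¹) - 2*b^2*c^2*d^2*s^2*t^2 + 2*a*b*c*d^2*s^2*t^2*(d⁻¹)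
    + 2*a*b*c*d^3*s^2*t^2 + 2*a*b^2*c*d^2*s^2*t^2*(s⁻¹)*(t⁻¹) + 2*a*b^2*c*d^2*s^2*t^3*(s⁻¹) +
    2*a*b^2*c*d^2*s^3*t^2*(t⁻¹) + 2*a*b^2*c*d^2*s^3*t^3 + 2*a*b^3*c*d^2*s^2*t^2*(d⁻¹) +
    2*a*b^3*c*d^3*s^2*t^2 - 4*a^2*b*c*d^2*s^2*t^2*(t⁻¹) - 4*a^2*b*c*d^2*s^2*t^3 +
    2*a^2*b^2*d^2*s^2*t^2 - 4*a^2*b^2*c*d^2*s^2*t^2*(d⁻¹)*(s⁻¹) + 2*a^2*b^2*c*d^2*s^2*t^2*(c⁻¹) -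
    4*a^2*b^2*c*d^2*s^3*t^2*(d⁻¹) - 4*a^2*b^2*c*d^3*s^2*t^2*(s⁻¹) - 4*a^2*b^2*c*d^3*s^3*t^2 +
    4*a^2*b^2*c^2*d^2*s^2*t^2 - 4*a^2*b^3*c*d^2*s^2*t^2*(t⁻¹) - 4*a^2*b^3*c*d^2*s^2*t^3 +
    2*a^3*b*c*d^2*s^2*t^2*(d⁻¹) + 2*a^3*b*c*d^3*s^2*t^2 + 2*a^3*b^2*c*d^2*s^2*t^2*(s⁻¹)*(t⁻¹) +
    2*a^3*b^2*c*d^2*s^2*t^3*(s⁻¹) + 2*a^3*b^2*c*d^2*s^3*t^2*(t⁻¹) + 2*a^3*b^2*c*d^2*s^3*t^3 +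
    2*a^3*b^3*c*d^2*s^2*t^2*(d⁻¹) + 2*a^3*b^3*c*d^3*s^2*t^2 - a^4*b^2*d^2*s^2*t^2 -
    a^4*b^2*c*d^2*s^2*t^2*(c⁻¹) - 2*a^4*b^2*c^2*d^2*s^2*t^2) * hcc +
    (2*a*b*c*d*s^2*t^2 + 2*a*b*c^3*d*s^2*t^2 - 4*a*b^2*c^2*d*s^2*t^2*(t⁻¹) - 4*a*b^2*c^2*d*s^2*t^3 +
    2*a*b^3*c*d*s^2*t^2 + 2*a*b^3*c^3*d*s^2*t^2 - a^2*c^2*s^2*t^2 - a^2*c^2*d*s^2*t^2*(d⁻¹) -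
    2*a^2*c^2*d^2*s^2*t^2 + 2*a^2*b*c^2*d*s^2*t^2*(s⁻¹)*(t⁻¹) + 2*a^2*b*c^2*d*s^2*t^3*(s⁻¹) +
    2*a^2*b*c^2*d*s^3*t^2*(t⁻¹) + 2*a^2*b*c^2*d*s^3*t^3 - 4*a^2*b^2*c*d*s^2*t^2*(s⁻¹) -
    4*a^2*b^2*c*d*s^3*t^2 + 2*a^2*b^2*c^2*s^2*t^2 + 2*a^2*b^2*c^2*d*s^2*t^2*(d⁻¹) +
    4*a^2*b^2*c^2*d^2*s^2*t^2 - 4*a^2*b^2*c^3*d*s^2*t^2*(s⁻¹) - 4*a^2*b^2*c^3*d*s^3*t^2 +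
    2*a^2*b^3*c^2*d*s^2*t^2*(s⁻¹)*(t⁻¹) + 2*a^2*b^3*c^2*d*s^2*t^3*(s⁻¹) +
    2*a^2*b^3*c^2*d*s^3*t^2*(t⁻¹) + 2*a^2*b^3*c^2*d*s^3*t^3 - a^2*b^4*c^2*s^2*t^2 -
    a^2*b^4*c^2*d*s^2*t^2*(d⁻¹) - 2*a^2*b^4*c^2*d^2*s^2*t^2 + 2*a^3*b*c*d*s^2*t^2 +
    2*a^3*b*c^3*d*s^2*t^2 - 4*a^3*b^2*c^2*d*s^2*t^2*(t⁻¹) - 4*a^3*b^2*c^2*d*s^2*t^3 +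
    2*a^3*b^3*c*d*s^2*t^2 + 2*a^3*b^3*c^3*d*s^2*t^2) * hdd +
    (-4*a*b*c^2*d^2*s*t^2 + 2*a*b^2*c*d^2*s*t^2*(t⁻¹) + 2*a*b^2*c*d^2*s*t^3 +
    2*a*b^2*c^3*d^2*s*t^2*(t⁻¹) + 2*a*b^2*c^3*d^2*s*t^3 - 4*a*b^3*c^2*d^2*s*t^2 +
    2*a^2*b*c^2*d*s*t^2*(t⁻¹) + 2*a^2*b*c^2*d*s*t^3 + 2*a^2*b*c^2*d^3*s*t^2*(t⁻¹) +
    2*a^2*b*c^2*d^3*s*t^3 - 4*a^2*b^2*c*d*s*t^2 - 4*a^2*b^2*c*d^3*s*t^2 + 4*a^2*b^2*c^2*d^2*t^2 -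
    a^2*b^2*c^2*d^2*t^2*(t⁻¹)^2 - 2*a^2*b^2*c^2*d^2*t^3*(t⁻¹) - a^2*b^2*c^2*d^2*t^4 +
    4*a^2*b^2*c^2*d^2*s*t^2*(s⁻¹) - a^2*b^2*c^2*d^2*s*t^2*(s⁻¹)*(t⁻¹)^2 -
    2*a^2*b^2*c^2*d^2*s*t^3*(s⁻¹)*(t⁻¹) - a^2*b^2*c^2*d^2*s*t^4*(s⁻¹) + 8*a^2*b^2*c^2*d^2*s^2*t^2 -
    2*a^2*b^2*c^2*d^2*s^2*t^2*(t⁻¹)^2 - 4*a^2*b^2*c^2*d^2*s^2*t^3*(t⁻¹) - 2*a^2*b^2*c^2*d^2*s^2*t^4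
    - 4*a^2*b^2*c^3*d*s*t^2 - 4*a^2*b^2*c^3*d^3*s*t^2 + 2*a^2*b^3*c^2*d*s*t^2*(t⁻¹) +
    2*a^2*b^3*c^2*d*s*t^3 + 2*a^2*b^3*c^2*d^3*s*t^2*(t⁻¹) + 2*a^2*b^3*c^2*d^3*s*t^3 -
    4*a^3*b*c^2*d^2*s*t^2 + 2*a^3*b^2*c*d^2*s*t^2*(t⁻¹) + 2*a^3*b^2*c*d^2*s*t^3 +
    2*a^3*b^2*c^3*d^2*s*t^2*(t⁻¹) + 2*a^3*b^2*c^3*d^2*s*t^3 - 4*a^3*b^3*c^2*d^2*s*t^2) * hss +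
    (2*a*b^2*c*d^2*s*t + 2*a*b^2*c*d^2*s^3*t - 4*a*b^2*c^2*d*s^2*t - 4*a*b^2*c^2*d^3*s^2*t +
    2*a*b^2*c^3*d^2*s*t + 2*a*b^2*c^3*d^2*s^3*t - 4*a^2*b*c*d^2*s^2*t + 2*a^2*b*c^2*d*s*t +
    2*a^2*b*c^2*d*s^3*t + 2*a^2*b*c^2*d^3*s*t + 2*a^2*b*c^2*d^3*s^3*t - 4*a^2*b*c^3*d^2*s^2*t -
    a^2*b^2*c^2*d^2 - a^2*b^2*c^2*d^2*t*(t⁻¹) - 2*a^2*b^2*c^2*d^2*t^2 + 2*a^2*b^2*c^2*d^2*s^2 +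
    2*a^2*b^2*c^2*d^2*s^2*t*(t⁻¹) + 4*a^2*b^2*c^2*d^2*s^2*t^2 - a^2*b^2*c^2*d^2*s^4 -
    a^2*b^2*c^2*d^2*s^4*t*(t⁻¹) - 2*a^2*b^2*c^2*d^2*s^4*t^2 - 4*a^2*b^3*c*d^2*s^2*t +
    2*a^2*b^3*c^2*d*s*t + 2*a^2*b^3*c^2*d*s^3*t + 2*a^2*b^3*c^2*d^3*s*t + 2*a^2*b^3*c^2*d^3*s^3*t -
    4*a^2*b^3*c^3*d^2*s^2*t + 2*a^3*b^2*c*d^2*s*t + 2*a^3*b^2*c*d^2*s^3*t - 4*a^3*b^2*c^2*d*s^2*t -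
    4*a^3*b^2*c^2*d^3*s^2*t + 2*a^3*b^2*c^3*d^2*s*t + 2*a^3*b^2*c^3*d^2*s^3*t) * htt

/-- the two numbers `z± = (A ± q)/(2D)`, with `q² = det G`, are roots of the
equation `∏ₖ (1 − z·e^{2πiνₖ}) = ∏ₖ (1 − z·e^{2πiλₖ})`. -/
theorem zpm_are_roots
    (θ0 θt θ1 θinf σ0t σ1t : ℂ) (p0 pt p1 pinf p0t p1t : ℂ)
    (hp0 : p0 = 2 * Complex.cos (2 * (π : ℂ) * θ0))
    (hpt : pt = 2 * Complex.cos (2 * (π : ℂ) * θt))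
    (hp1 : p1 = 2 * Complex.cos (2 * (π : ℂ) * θ1))
    (hpinf : pinf = 2 * Complex.cos (2 * (π : ℂ) * θinf))
    (hp0t : p0t = 2 * Complex.cos (2 * (π : ℂ) * σ0t))
    (hp1t : p1t = 2 * Complex.cos (2 * (π : ℂ) * σ1t))
    (G : Matrix (Fin 4) (Fin 4) ℂ)
    (hG : G = !![2, -p0, -pt, p1t;
                 -p0, 2, p0t, -pinf;
                 -pt, p0t, 2, -p1;
                 p1t, -pinf, -p1, 2])
    (ν1 ν2 ν3 ν4 lam1 lam2 lam3 lam4 νS A D q : ℂ)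
    (hν1 : ν1 = σ0t + θ0 + θt) (hν2 : ν2 = σ0t + θ1 + θinf)
    (hν3 : ν3 = σ1t + θ0 + θinf) (hν4 : ν4 = σ1t + θt + θ1)
    (hlam1 : lam1 = θ0 + θt + θ1 + θinf) (hlam2 : lam2 = σ0t + σ1t + θ0 + θ1)
    (hlam3 : lam3 = σ0t + σ1t + θt + θinf) (hlam4 : lam4 = 0)
    (hνS : νS = (ν1 + ν2 + ν3 + ν4) / 2)
    (hA : A = 4 * Complex.sin (2 * (π : ℂ) * σ0t) * Complex.sin (2 * (π : ℂ) * σ1t)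
            + 4 * Complex.sin (2 * (π : ℂ) * θt) * Complex.sin (2 * (π : ℂ) * θinf)
            + 4 * Complex.sin (2 * (π : ℂ) * θ0) * Complex.sin (2 * (π : ℂ) * θ1))
    (hD : D = (Complex.exp (2 * (π : ℂ) * I * (νS - ν1)) - Complex.exp (2 * (π : ℂ) * I * (νS - lam1)))
            + (Complex.exp (2 * (π : ℂ) * I * (νS - ν2)) - Complex.exp (2 * (π : ℂ) * I * (νS - lam2)))
            + (Complex.exp (2 * (π : ℂ) * I * (νS - ν3)) - Complex.exp (2 * (π : ℂ) * I * (νS - lam3)))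
            + (Complex.exp (2 * (π : ℂ) * I * (νS - ν4)) - Complex.exp (2 * (π : ℂ) * I * (νS - lam4))))
    (hq : q ^ 2 = G.det) (hDne : D ≠ 0) :
    ∀ z : ℂ, z = (A + q) / (2 * D) ∨ z = (A - q) / (2 * D) →
      (1 - z * Complex.exp (2 * (π : ℂ) * I * ν1)) *
      (1 - z * Complex.exp (2 * (π : ℂ) * I * ν2)) *
      (1 - z * Complex.exp (2 * (π : ℂ) * I * ν3)) *
      (1 - z * Complex.exp (2 * (π : ℂ) * I * ν4)) =
      (1 - z * Complex.exp (2 * (π : ℂ) * I * lam1)) *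
      (1 - z * Complex.exp (2 * (π : ℂ) * I * lam2)) *
      (1 - z * Complex.exp (2 * (π : ℂ) * I * lam3)) *
      (1 - z * Complex.exp (2 * (π : ℂ) * I * lam4)) := by
  intro z hz
  have Emul : ∀ x y : ℂ, Complex.exp (2 * (π : ℂ) * I * (x + y)) =
      Complex.exp (2 * (π : ℂ) * I * x) * Complex.exp (2 * (π : ℂ) * I * y) := by
    intro x y; rw [mul_add, Complex.exp_add]
  set a := Complex.exp (2 * (π : ℂ) * I * θ0) with hadef
  set b := Complex.exp (2 * (π : ℂ) * I * θt) with hbdef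
  set c := Complex.exp (2 * (π : ℂ) * I * θ1) with hcdef
  set d := Complex.exp (2 * (π : ℂ) * I * θinf) with hddef
  set s := Complex.exp (2 * (π : ℂ) * I * σ0t) with hsdef
  set t := Complex.exp (2 * (π : ℂ) * I * σ1t) with htdef
  have ha : a ≠ 0 := Complex.exp_ne_zero _
  have hb : b ≠ 0 := Complex.exp_ne_zero _
  have hc : c ≠ 0 := Complex.exp_ne_zero _
  have hcne : c ≠ 0 := Complex.exp_ne_zero _
  have hd : d ≠ 0 := Complex.exp_ne_zero _
  have hs : s ≠ 0 := Complex.exp_ne_zero _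
  have ht : t ≠ 0 := Complex.exp_ne_zero _
  have haa : a * a⁻¹ = 1 := mul_inv_cancel₀ ha
  have hbb : b * b⁻¹ = 1 := mul_inv_cancel₀ hb
  have hcc : c * c⁻¹ = 1 := mul_inv_cancel₀ hc
  have hdd : d * d⁻¹ = 1 := mul_inv_cancel₀ hd
  have hss : s * s⁻¹ = 1 := mul_inv_cancel₀ hs
  have htt : t * t⁻¹ = 1 := mul_inv_cancel₀ ht
  have hcos : ∀ x : ℂ, 2 * Complex.cos (2 * (π : ℂ) * x) =
      Complex.exp (2 * (π : ℂ) * I * x) + (Complex.exp (2 * (π : ℂ) * I * x))⁻¹ := by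
    intro x
    simp only [Complex.cos]
    rw [show (2 * (π : ℂ) * x) * I = 2 * (π : ℂ) * I * x by ring,
        show -(2 * (π : ℂ) * x) * I = -(2 * (π : ℂ) * I * x) by ring,
        Complex.exp_neg]
    ring
  have hsin : ∀ x : ℂ, Complex.sin (2 * (π : ℂ) * x) =
      ((Complex.exp (2 * (π : ℂ) * I * x))⁻¹ - Complex.exp (2 * (π : ℂ) * I * x)) * I / 2 := by
    intro x
    simp only [Complex.sin]
    rw [show (2 * (π : ℂ) * x) * I = 2 * (π : ℂ) * I * x by ring,
        show -(2 * (π : ℂ) * x) * I = -(2 * (π : ℂ) * I * x) by ring,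
        Complex.exp_neg]
  have hp0' : p0 = a + a⁻¹ := by rw [hp0, hcos θ0]
  have hpt' : pt = b + b⁻¹ := by rw [hpt, hcos θt]
  have hp1' : p1 = c + c⁻¹ := by rw [hp1, hcos θ1]
  have hpinf' : pinf = d + d⁻¹ := by rw [hpinf, hcos θinf]
  have hp0t' : p0t = s + s⁻¹ := by rw [hp0t, hcos σ0t]
  have hp1t' : p1t = t + t⁻¹ := by rw [hp1t, hcos σ1t]
  set M := s * t * a * b * c * d with hM
  set PD := t*c*d + t*a*b + s*b*c + s*a*d - s*t - b*d - a*c - s*t*a*b*c*d with hPD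
  set PB := s*a*b + s*c*d + t*a*d + t*b*c - a*b*c*d - s*t*a*c - s*t*b*d - 1 with hPB
  set PA := s^2*(a*b*c*d) + t^2*(a*b*c*d) - s^2*t^2*(a*b*c*d) - a*b*c*d
      + s*t*a*b^2*c + s*t*a*c*d^2 - s*t*a*b^2*c*d^2 - s*t*a*c
      + s*t*a^2*b*d + s*t*b*c^2*d - s*t*a^2*b*c^2*d - s*t*b*d with hPA
  -- A in exponential variables
  have hA' : A = -(s - s⁻¹) * (t - t⁻¹) - (b - b⁻¹) * (d - d⁻¹) - (a - a⁻¹) * (c - c⁻¹) := by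
    rw [hA, hsin σ0t, hsin σ1t, hsin θt, hsin θinf, hsin θ0, hsin θ1]
    linear_combination ((s⁻¹ - s) * (t⁻¹ - t) + (b⁻¹ - b) * (d⁻¹ - d) + (a⁻¹ - a) * (c⁻¹ - c)) *
      Complex.I_sq
  have hMA : M * A = PA := by
    rw [hA', hM, hPA]
    linear_combination (-b*c*d*s*t*(c⁻¹) + b*c^2*d*s*t) * haa +
      (-a*c*d*s*t*(d⁻¹) + a*c*d^2*s*t) * hbb +
      (-b*d*s*t + a^2*b*d*s*t) * hcc +
      (-a*c*s*t + a*b^2*c*s*t) * hdd +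
      (-a*b*c*d*t*(t⁻¹) + a*b*c*d*t^2) * hss +
      (-a*b*c*d + a*b*c*d*s^2) * htt
  -- D in exponential variables
  have e1 : Complex.exp (2 * (π : ℂ) * I * (νS - ν1)) = t * (c * d) := by
    rw [show νS - ν1 = σ1t + (θ1 + θinf) by
      rw [hνS, hν1, hν2, hν3, hν4]; ring, Emul, Emul]
  have e2 : Complex.exp (2 * (π : ℂ) * I * (νS - ν2)) = t * (a * b) := by
    rw [show νS - ν2 = σ1t + (θ0 + θt) by
      rw [hνS, hν1, hν2, hν3, hν4]; ring, Emul, Emul]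
  have e3 : Complex.exp (2 * (π : ℂ) * I * (νS - ν3)) = s * (b * c) := by
    rw [show νS - ν3 = σ0t + (θt + θ1) by
      rw [hνS, hν1, hν2, hν3, hν4]; ring, Emul, Emul]
  have e4 : Complex.exp (2 * (π : ℂ) * I * (νS - ν4)) = s * (a * d) := by
    rw [show νS - ν4 = σ0t + (θ0 + θinf) by
      rw [hνS, hν1, hν2, hν3, hν4]; ring, Emul, Emul]
  have f1 : Complex.exp (2 * (π : ℂ) * I * (νS - lam1)) = s * t := by
    rw [show νS - lam1 = σ0t + σ1t by
      rw [hνS, hν1, hν2, hν3, hν4, hlam1]; ring, Emul]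
  have f2 : Complex.exp (2 * (π : ℂ) * I * (νS - lam2)) = b * d := by
    rw [show νS - lam2 = θt + θinf by
      rw [hνS, hν1, hν2, hν3, hν4, hlam2]; ring, Emul]
  have f3 : Complex.exp (2 * (π : ℂ) * I * (νS - lam3)) = a * c := by
    rw [show νS - lam3 = θ0 + θ1 by
      rw [hνS, hν1, hν2, hν3, hν4, hlam3]; ring, Emul]
  have f4 : Complex.exp (2 * (π : ℂ) * I * (νS - lam4)) = s * (t * (a * (b * (c * d)))) := by
    rw [show νS - lam4 = σ0t + (σ1t + (θ0 + (θt + (θ1 + θinf)))) by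
      rw [hνS, hν1, hν2, hν3, hν4, hlam4]; ring, Emul, Emul, Emul, Emul, Emul]
  have hDD : D = PD := by
    rw [hD, e1, e2, e3, e4, f1, f2, f3, f4, hPD]; ring
  -- the key determinant identity
  have key : PA ^ 2 - 4 * PB * (M * PD) = M ^ 2 * G.det := by
    have hdet : G.det =
        16 - 4*p1t^2 - 4*p0t^2 + p0t^2*p1t^2 - 4*pinf^2 + 4*p1*pinf*p0t - 4*p1^2
        - 2*pt*pinf*p0t*p1t + 4*pt*p1*p1t - 4*pt^2 + pt^2*pinf^2 + 4*p0*pinf*p1t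
        - 2*p0*p1*p0t*p1t + 4*p0*pt*p0t - 2*p0*pt*p1*pinf - 4*p0^2 + p0^2*p1^2 := by
      rw [hG]
      simp [Matrix.det_succ_row_zero, Fin.sum_univ_succ]
      simp [Fin.succAbove, Fin.lt_def]
      ring
    rw [hdet, hp0', hpt', hp1', hpinf', hp0t', hp1t', hPA, hPB, hM, hPD]
    linear_combination key_aux2 a b c d s t ha hb hcne hd hs ht
  -- the quadratic satisfied by z
  have hMne : M ≠ 0 := by
    rw [hM]; exact mul_ne_zero (mul_ne_zero (mul_ne_zero (mul_ne_zero (mul_ne_zero hs ht) ha) hb) hc) hd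
  have hPDne : PD ≠ 0 := hDD ▸ hDne
  have hq3 : (M * q) ^ 2 = PA ^ 2 - 4 * PB * (M * PD) := by
    linear_combination M ^ 2 * hq - key
  have hquad : (M * PD) * z ^ 2 - PA * z + PB = 0 := by
    have h0 : 4 * (M * PD) * ((M * PD) * z ^ 2 - PA * z + PB) = 0 := by
      rcases hz with hz | hz
      · have hz2 : 2 * D * z = A + q := by
          rw [hz, mul_comm]; exact div_mul_cancel₀ _ (mul_ne_zero two_ne_zero hDne)
        have hz3 : 2 * (M * PD) * z = PA + M * q := by
          linear_combination M * hz2 + (-2) * M * z * hDD + hMA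
        linear_combination (2 * (M * PD) * z + M * q - PA) * hz3 + hq3
      · have hz2 : 2 * D * z = A - q := by
          rw [hz, mul_comm]; exact div_mul_cancel₀ _ (mul_ne_zero two_ne_zero hDne)
        have hz3 : 2 * (M * PD) * z = PA - M * q := by
          linear_combination M * hz2 + (-2) * M * z * hDD + hMA
        linear_combination (2 * (M * PD) * z - M * q - PA) * hz3 + hq3
    have h4 : (4 : ℂ) * (M * PD) ≠ 0 := by
      exact mul_ne_zero (by norm_num) (mul_ne_zero hMne hPDne)
    exact (mul_eq_zero.mp h0).resolve_left h4
  -- rewrite the exponentials in the goal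
  have g1 : Complex.exp (2 * (π : ℂ) * I * ν1) = s * (a * b) := by
    rw [show ν1 = σ0t + (θ0 + θt) by rw [hν1]; ring, Emul, Emul]
  have g2 : Complex.exp (2 * (π : ℂ) * I * ν2) = s * (c * d) := by
    rw [show ν2 = σ0t + (θ1 + θinf) by rw [hν2]; ring, Emul, Emul]
  have g3 : Complex.exp (2 * (π : ℂ) * I * ν3) = t * (a * d) := by
    rw [show ν3 = σ1t + (θ0 + θinf) by rw [hν3]; ring, Emul, Emul]
  have g4 : Complex.exp (2 * (π : ℂ) * I * ν4) = t * (b * c) := by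
    rw [show ν4 = σ1t + (θt + θ1) by rw [hν4]; ring, Emul, Emul]
  have k1 : Complex.exp (2 * (π : ℂ) * I * lam1) = a * (b * (c * d)) := by
    rw [show lam1 = θ0 + (θt + (θ1 + θinf)) by rw [hlam1]; ring, Emul, Emul, Emul]
  have k2 : Complex.exp (2 * (π : ℂ) * I * lam2) = s * (t * (a * c)) := by
    rw [show lam2 = σ0t + (σ1t + (θ0 + θ1)) by rw [hlam2]; ring, Emul, Emul, Emul]
  have k3 : Complex.exp (2 * (π : ℂ) * I * lam3) = s * (t * (b * d)) := by
    rw [show lam3 = σ0t + (σ1t + (θt + θinf)) by rw [hlam3]; ring, Emul, Emul, Emul]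
  have k4 : Complex.exp (2 * (π : ℂ) * I * lam4) = 1 := by
    rw [hlam4, mul_zero, Complex.exp_zero]
  rw [hM, hPD, hPA, hPB] at hquad
  rw [g1, g2, g3, g4, k1, k2, k3, k4]
  linear_combination (-z) * hquad
end

section
/- For all complex θ0, θt, θ1, θ∞, σ0t, σ1t, with pμ = 2cos(2πθμ), p0t = 2cos(2πσ0t), p1t = 2cos(2πσ1t), the identity A² − det G = 4·N·D holds. Equivalently, when D ≠ 0 and q² = det G, the two roots z± = (A ± q)/(2D) satisfy z₊·z₋ = N/D. -/
set_option maxHeartbeats 1000000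


open Complex Real

/-- the identity `A² − det G = 4·N·D`; equivalently, when `D ≠ 0` and
`q² = det G`, the roots `z± = (A ± q)/(2D)` satisfy `z₊·z₋ = N/D`. -/
theorem zp_zm_product
    (θ0 θt θ1 θinf σ0t σ1t : ℂ) (p0 pt p1 pinf p0t p1t : ℂ)
    (hp0 : p0 = 2 * Complex.cos (2 * (π : ℂ) * θ0))
    (hpt : pt = 2 * Complex.cos (2 * (π : ℂ) * θt))
    (hp1 : p1 = 2 * Complex.cos (2 * (π : ℂ) * θ1))
    (hpinf : pinf = 2 * Complex.cos (2 * (π : ℂ) * θinf))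
    (hp0t : p0t = 2 * Complex.cos (2 * (π : ℂ) * σ0t))
    (hp1t : p1t = 2 * Complex.cos (2 * (π : ℂ) * σ1t))
    (G : Matrix (Fin 4) (Fin 4) ℂ)
    (hG : G = !![2, -p0, -pt, p1t;
                 -p0, 2, p0t, -pinf;
                 -pt, p0t, 2, -p1;
                 p1t, -pinf, -p1, 2])
    (ν1 ν2 ν3 ν4 lam1 lam2 lam3 lam4 νS A D N : ℂ)
    (hν1 : ν1 = σ0t + θ0 + θt) (hν2 : ν2 = σ0t + θ1 + θinf)
    (hν3 : ν3 = σ1t + θ0 + θinf) (hν4 : ν4 = σ1t + θt + θ1)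
    (hlam1 : lam1 = θ0 + θt + θ1 + θinf) (hlam2 : lam2 = σ0t + σ1t + θ0 + θ1)
    (hlam3 : lam3 = σ0t + σ1t + θt + θinf) (hlam4 : lam4 = 0)
    (hνS : νS = (ν1 + ν2 + ν3 + ν4) / 2)
    (hA : A = 4 * Complex.sin (2 * (π : ℂ) * σ0t) * Complex.sin (2 * (π : ℂ) * σ1t)
            + 4 * Complex.sin (2 * (π : ℂ) * θt) * Complex.sin (2 * (π : ℂ) * θinf)
            + 4 * Complex.sin (2 * (π : ℂ) * θ0) * Complex.sin (2 * (π : ℂ) * θ1))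
    (hD : D = (Complex.exp (2 * (π : ℂ) * I * (νS - ν1)) - Complex.exp (2 * (π : ℂ) * I * (νS - lam1)))
            + (Complex.exp (2 * (π : ℂ) * I * (νS - ν2)) - Complex.exp (2 * (π : ℂ) * I * (νS - lam2)))
            + (Complex.exp (2 * (π : ℂ) * I * (νS - ν3)) - Complex.exp (2 * (π : ℂ) * I * (νS - lam3)))
            + (Complex.exp (2 * (π : ℂ) * I * (νS - ν4)) - Complex.exp (2 * (π : ℂ) * I * (νS - lam4))))
    (hN : N = (Complex.exp (2 * (π : ℂ) * I * (ν1 - νS)) - Complex.exp (2 * (π : ℂ) * I * (lam1 - νS)))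
            + (Complex.exp (2 * (π : ℂ) * I * (ν2 - νS)) - Complex.exp (2 * (π : ℂ) * I * (lam2 - νS)))
            + (Complex.exp (2 * (π : ℂ) * I * (ν3 - νS)) - Complex.exp (2 * (π : ℂ) * I * (lam3 - νS)))
            + (Complex.exp (2 * (π : ℂ) * I * (ν4 - νS)) - Complex.exp (2 * (π : ℂ) * I * (lam4 - νS)))) :
    A ^ 2 - G.det = 4 * N * D ∧
    (∀ q : ℂ, q ^ 2 = G.det → D ≠ 0 →
      ((A + q) / (2 * D)) * ((A - q) / (2 * D)) = N / D) := by
  have Emul : ∀ x y : ℂ, Complex.exp (2 * (π : ℂ) * I * (x + y))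
      = Complex.exp (2 * (π : ℂ) * I * x) * Complex.exp (2 * (π : ℂ) * I * y) := by
    intro x y; rw [← Complex.exp_add]; ring_nf
  have Eneg : ∀ x : ℂ, Complex.exp (2 * (π : ℂ) * I * (-x))
      = (Complex.exp (2 * (π : ℂ) * I * x))⁻¹ := by
    intro x
    rw [show 2 * (π : ℂ) * I * (-x) = -(2 * (π : ℂ) * I * x) from by ring, Complex.exp_neg]
  have Cos : ∀ x : ℂ, Complex.cos (2 * (π : ℂ) * x)
      = (Complex.exp (2 * (π : ℂ) * I * x) + (Complex.exp (2 * (π : ℂ) * I * x))⁻¹) / 2 := by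
    intro x
    simp only [Complex.cos]
    rw [show 2 * (π : ℂ) * x * I = 2 * (π : ℂ) * I * x from by ring,
        show -(2 * (π : ℂ) * x) * I = -(2 * (π : ℂ) * I * x) from by ring, Complex.exp_neg]
  have Sin : ∀ x : ℂ, Complex.sin (2 * (π : ℂ) * x)
      = ((Complex.exp (2 * (π : ℂ) * I * x))⁻¹ - Complex.exp (2 * (π : ℂ) * I * x)) * I / 2 := by
    intro x
    simp only [Complex.sin]
    rw [show 2 * (π : ℂ) * x * I = 2 * (π : ℂ) * I * x from by ring,
        show -(2 * (π : ℂ) * x) * I = -(2 * (π : ℂ) * I * x) from by ring, Complex.exp_neg]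
  have hD' : D = Complex.exp (2 * (π : ℂ) * I * σ1t) * Complex.exp (2 * (π : ℂ) * I * θ1) * Complex.exp (2 * (π : ℂ) * I * θinf) - Complex.exp (2 * (π : ℂ) * I * σ0t) * Complex.exp (2 * (π : ℂ) * I * σ1t)
      + (Complex.exp (2 * (π : ℂ) * I * σ1t) * Complex.exp (2 * (π : ℂ) * I * θ0) * Complex.exp (2 * (π : ℂ) * I * θt) - Complex.exp (2 * (π : ℂ) * I * θt) * Complex.exp (2 * (π : ℂ) * I * θinf))
      + (Complex.exp (2 * (π : ℂ) * I * σ0t) * Complex.exp (2 * (π : ℂ) * I * θt) * Complex.exp (2 * (π : ℂ) * I * θ1) - Complex.exp (2 * (π : ℂ) * I * θ0) * Complex.exp (2 * (π : ℂ) * I * θ1))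
      + (Complex.exp (2 * (π : ℂ) * I * σ0t) * Complex.exp (2 * (π : ℂ) * I * θ0) * Complex.exp (2 * (π : ℂ) * I * θinf) - Complex.exp (2 * (π : ℂ) * I * σ0t) * Complex.exp (2 * (π : ℂ) * I * σ1t) * Complex.exp (2 * (π : ℂ) * I * θ0) * Complex.exp (2 * (π : ℂ) * I * θt) * Complex.exp (2 * (π : ℂ) * I * θ1) * Complex.exp (2 * (π : ℂ) * I * θinf)) := by
    rw [hD,
      show νS - ν1 = σ1t + (θ1 + θinf) from by rw [hνS, hν1, hν2, hν3, hν4]; ring,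
      show νS - lam1 = σ0t + σ1t from by rw [hνS, hν1, hν2, hν3, hν4, hlam1]; ring,
      show νS - ν2 = σ1t + (θ0 + θt) from by rw [hνS, hν1, hν2, hν3, hν4]; ring,
      show νS - lam2 = θt + θinf from by rw [hνS, hν1, hν2, hν3, hν4, hlam2]; ring,
      show νS - ν3 = σ0t + (θt + θ1) from by rw [hνS, hν1, hν2, hν3, hν4]; ring,
      show νS - lam3 = θ0 + θ1 from by rw [hνS, hν1, hν2, hν3, hν4, hlam3]; ring,
      show νS - ν4 = σ0t + (θ0 + θinf) from by rw [hνS, hν1, hν2, hν3, hν4]; ring,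
      show νS - lam4 = σ0t + (σ1t + (θ0 + (θt + (θ1 + θinf)))) from by
        rw [hνS, hν1, hν2, hν3, hν4, hlam4]; ring]
    simp only [Emul]
    ring
  have hN' : N = (Complex.exp (2 * (π : ℂ) * I * σ1t))⁻¹ * (Complex.exp (2 * (π : ℂ) * I * θ1))⁻¹ * (Complex.exp (2 * (π : ℂ) * I * θinf))⁻¹ - (Complex.exp (2 * (π : ℂ) * I * σ0t))⁻¹ * (Complex.exp (2 * (π : ℂ) * I * σ1t))⁻¹
      + ((Complex.exp (2 * (π : ℂ) * I * σ1t))⁻¹ * (Complex.exp (2 * (π : ℂ) * I * θ0))⁻¹ * (Complex.exp (2 * (π : ℂ) * I * θt))⁻¹ - (Complex.exp (2 * (π : ℂ) * I * θt))⁻¹ * (Complex.exp (2 * (π : ℂ) * I * θinf))⁻¹)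
      + ((Complex.exp (2 * (π : ℂ) * I * σ0t))⁻¹ * (Complex.exp (2 * (π : ℂ) * I * θt))⁻¹ * (Complex.exp (2 * (π : ℂ) * I * θ1))⁻¹ - (Complex.exp (2 * (π : ℂ) * I * θ0))⁻¹ * (Complex.exp (2 * (π : ℂ) * I * θ1))⁻¹)
      + ((Complex.exp (2 * (π : ℂ) * I * σ0t))⁻¹ * (Complex.exp (2 * (π : ℂ) * I * θ0))⁻¹ * (Complex.exp (2 * (π : ℂ) * I * θinf))⁻¹
        - (Complex.exp (2 * (π : ℂ) * I * σ0t))⁻¹ * (Complex.exp (2 * (π : ℂ) * I * σ1t))⁻¹ * (Complex.exp (2 * (π : ℂ) * I * θ0))⁻¹ * (Complex.exp (2 * (π : ℂ) * I * θt))⁻¹ * (Complex.exp (2 * (π : ℂ) * I * θ1))⁻¹ * (Complex.exp (2 * (π : ℂ) * I * θinf))⁻¹) := by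
    rw [hN,
      show ν1 - νS = -(σ1t + (θ1 + θinf)) from by rw [hνS, hν1, hν2, hν3, hν4]; ring,
      show lam1 - νS = -(σ0t + σ1t) from by rw [hνS, hν1, hν2, hν3, hν4, hlam1]; ring,
      show ν2 - νS = -(σ1t + (θ0 + θt)) from by rw [hνS, hν1, hν2, hν3, hν4]; ring,
      show lam2 - νS = -(θt + θinf) from by rw [hνS, hν1, hν2, hν3, hν4, hlam2]; ring,
      show ν3 - νS = -(σ0t + (θt + θ1)) from by rw [hνS, hν1, hν2, hν3, hν4]; ring,
      show lam3 - νS = -(θ0 + θ1) from by rw [hνS, hν1, hν2, hν3, hν4, hlam3]; ring,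
      show ν4 - νS = -(σ0t + (θ0 + θinf)) from by rw [hνS, hν1, hν2, hν3, hν4]; ring,
      show lam4 - νS = -(σ0t + (σ1t + (θ0 + (θt + (θ1 + θinf))))) from by
        rw [hνS, hν1, hν2, hν3, hν4, hlam4]; ring]
    simp only [Eneg, Emul, mul_inv]
    ring
  have hA' : A = -(((Complex.exp (2 * (π : ℂ) * I * σ0t))⁻¹ - Complex.exp (2 * (π : ℂ) * I * σ0t)) * ((Complex.exp (2 * (π : ℂ) * I * σ1t))⁻¹ - Complex.exp (2 * (π : ℂ) * I * σ1t)))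
      - ((Complex.exp (2 * (π : ℂ) * I * θt))⁻¹ - Complex.exp (2 * (π : ℂ) * I * θt)) * ((Complex.exp (2 * (π : ℂ) * I * θinf))⁻¹ - Complex.exp (2 * (π : ℂ) * I * θinf))
      - ((Complex.exp (2 * (π : ℂ) * I * θ0))⁻¹ - Complex.exp (2 * (π : ℂ) * I * θ0)) * ((Complex.exp (2 * (π : ℂ) * I * θ1))⁻¹ - Complex.exp (2 * (π : ℂ) * I * θ1)) := by
    rw [hA, Sin, Sin, Sin, Sin, Sin, Sin]
    linear_combination (((Complex.exp (2 * (π : ℂ) * I * σ0t))⁻¹ - Complex.exp (2 * (π : ℂ) * I * σ0t)) * ((Complex.exp (2 * (π : ℂ) * I * σ1t))⁻¹ - Complex.exp (2 * (π : ℂ) * I * σ1t))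
      + ((Complex.exp (2 * (π : ℂ) * I * θt))⁻¹ - Complex.exp (2 * (π : ℂ) * I * θt)) * ((Complex.exp (2 * (π : ℂ) * I * θinf))⁻¹ - Complex.exp (2 * (π : ℂ) * I * θinf))
      + ((Complex.exp (2 * (π : ℂ) * I * θ0))⁻¹ - Complex.exp (2 * (π : ℂ) * I * θ0)) * ((Complex.exp (2 * (π : ℂ) * I * θ1))⁻¹ - Complex.exp (2 * (π : ℂ) * I * θ1))) * Complex.I_sq
  have hdet : G.det = 16 + p1*p0t*pinf*4 - p1*p0t*p0*p1t*2 - p1*pinf*p0*pt*2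
      + p1*pt*p1t*4 - p1^2*4 + p1^2*p0^2 - p0t*pinf*pt*p1t*2 + p0t*p0*pt*4
      - p0t^2*4 + p0t^2*p1t^2 + pinf*p0*p1t*4 - pinf^2*4 + pinf^2*pt^2
      - p0^2*4 - pt^2*4 - p1t^2*4 := by
    rw [hG]
    simp [Matrix.det_succ_row_zero, Fin.sum_univ_succ, Fin.succAbove,
      Fin.ext_iff, show (Fin.castSucc 2 : Fin 4) = 2 from rfl]
    ring
  have main : A ^ 2 - G.det = 4 * N * D := by
    rw [hdet, hA', hD', hN', hp0, hpt, hp1, hpinf, hp0t, hp1t, Cos, Cos, Cos, Cos, Cos, Cos]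
    set a := Complex.exp (2 * (π : ℂ) * I * θ0) with ha
    set b := Complex.exp (2 * (π : ℂ) * I * θt) with hb
    set c := Complex.exp (2 * (π : ℂ) * I * θ1) with hc
    set d := Complex.exp (2 * (π : ℂ) * I * θinf) with hd
    set u := Complex.exp (2 * (π : ℂ) * I * σ0t) with hu
    set v := Complex.exp (2 * (π : ℂ) * I * σ1t) with hv
    set a' := a⁻¹ with ha'
    set b' := b⁻¹ with hb'
    set c' := c⁻¹ with hc'
    set d' := d⁻¹ with hd'
    set u' := u⁻¹ with hu'
    set v' := v⁻¹ with hv'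
    have haa : a * a' = 1 := by rw [ha']; exact mul_inv_cancel₀ (Complex.exp_ne_zero _)
    have hbb : b * b' = 1 := by rw [hb']; exact mul_inv_cancel₀ (Complex.exp_ne_zero _)
    have hcc : c * c' = 1 := by rw [hc']; exact mul_inv_cancel₀ (Complex.exp_ne_zero _)
    have hdd : d * d' = 1 := by rw [hd']; exact mul_inv_cancel₀ (Complex.exp_ne_zero _)
    have huu : u * u' = 1 := by rw [hu']; exact mul_inv_cancel₀ (Complex.exp_ne_zero _)
    have hvv : v * v' = 1 := by rw [hv']; exact mul_inv_cancel₀ (Complex.exp_ne_zero _)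
    linear_combination (8 + (-4)*c'^2 + (-4)*d*u*d'*u' + 4*d*u*c' + (-4)*d*u*b'*v' + 4*d*u*b'*c'*d'*u'*v' + 4*c*d'*u' + (-4)*c*c' + 4*c*b'*v' + (-4)*c*b'*c'*d'*u'*v' + (-4)*c^2 + (-4)*b*v*d'*u' + 4*b*v*c' + (-4)*b*v*b'*v' + 4*b*v*b'*c'*d'*u'*v' + 4*b*c*d*u*v*d'*u' + (-4)*b*c*d*u*v*c' + 4*b*c*d*u*v*b'*v' + (-4)*b*c*d*u*v*b'*c'*d'*u'*v') * haa
      + (8 + (-4)*d'^2 + (-4)*v*v' + 4*v*c'*d'*u'*v' + (-4)*d*d' + 4*d*c'*u' + 4*d*a'*v' + (-4)*d*a'*c'*d'*u'*v' + (-4)*d^2 + 4*c*u*d' + (-4)*c*u*c'*u' + (-4)*c*u*a'*v' + 4*c*u*a'*c'*d'*u'*v' + 4*c*d*u*v*v' + (-4)*c*d*u*v*c'*d'*u'*v' + 4*a*v*d' + (-4)*a*v*c'*u' + (-4)*a*c*d*u*v*d' + 4*a*c*d*u*v*c'*u') * hbb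
      + (4 + (-4)*b'*d'*u'*v' + (-4)*a'^2 + (-4)*u*u' + 4*u*a'*d'*u'*v' + (-4)*d*v*d'*v' + (-4)*d*v*b'*u' + 4*d*v*a' + 4*d*v*a'*b'*d'*u'*v' + (-4)*d*u*v*d'*u'*v' + (-4)*b*u*d'*v' + 4*b*u*a' + (-4)*b*d*u*v + 4*a*d'*v' + 4*a*b'*u' + 4*a*d*u*v*u' + 4*a*b*d*u*v*d'*v' + (-4)*a^2) * hcc
      + (4 + (-4)*b'^2 + (-4)*a'*c'*u'*v' + (-4)*v*v' + 4*v*a'*b'*u'*v' + (-4)*u*u' + 4*u*b'*c'*u'*v' + (-4)*u*v*u'*v' + 4*c*v*b' + (-4)*c*v*a'*u' + 4*b*c'*v' + 4*b*a'*u' + 4*b*c*u*v*u' + (-4)*b^2 + (-4)*a*u*c'*v' + 4*a*u*b' + (-4)*a*c*u*v + 4*a*b*u*v*v') * hdd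
      + ((-4)*v'^2 + 4*b'*c'*v' + 4*a'*d'*v' + (-8)*v*v' + 4*v*b'*c' + 4*v*a'*d' + (-4)*v*a'*b'*c'*d'*v' + (-4)*v^2 + 4*b*c*v' + (-4)*b*c*a'*d' + 4*b*c*v + 4*a*d*v' + (-4)*a*d*b'*c' + 4*a*d*v + (-4)*a*b*c*d*v*v') * huu
      + ((-8) + (-4)*u'^2 + 4*c'*d'*u' + 4*a'*b'*u' + (-4)*a'*b'*c'*d' + 4*u*c'*d' + 4*u*a'*b' + (-4)*u^2 + 4*c*d*u' + (-4)*c*d*a'*b' + 4*c*d*u + 4*a*b*u' + (-4)*a*b*c'*d' + 4*a*b*u + (-4)*a*b*c*d) * hvv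
  refine ⟨main, fun q hq hD0 => ?_⟩
  field_simp
  linear_combination main - hq
end

section
/- (Fusion check for the Ashkin–Teller conformal block, c = 1.) For every τ ∈ ℂ with Im τ > 0 and every σ ∈ ℂ: 2^{4σ²}·e^{iπσ²τ} / θ₃(τ) = ∫_{0}^{∞} 2^{4σ² − 4ρ² + 1}·cos(2πσρ) · 2^{4ρ²}·e^{−iπρ²/τ} / θ₃(−1/τ) dρ, where the integral is over real ρ ∈ (0,∞). Equivalently, the Fourier-type kernel F₁(ρ,σ) = 2^{4σ²−4ρ²+1}·cos(2πσρ) intertwines the s- and t-channel Ashkin–Teller conformal blocks in the elliptic parameterization. -/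
open Complex Real MeasureTheory Set

/-- Integral of an even function over `ℝ` equals twice the integral over `(0, ∞)`. -/
lemma even_integral_aux {f : ℝ → ℂ} (hf : Integrable f) (he : ∀ x, f (-x) = f x) :
    ∫ x : ℝ, f x = 2 * ∫ x in Ioi (0 : ℝ), f x := by
  rw [← intervalIntegral.integral_Iic_add_Ioi (b := (0:ℝ)) hf.integrableOn hf.integrableOn,
    two_mul]
  congr 1
  calc ∫ x in Iic (0:ℝ), f x = ∫ x in Iic (0:ℝ), f (-x) := by simp_rw [he]
    _ = ∫ x in Ioi (-(0:ℝ)), f x := integral_comp_neg_Iic 0 f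
    _ = ∫ x in Ioi (0:ℝ), f x := by rw [neg_zero]

/-- fusion check for the Ashkin–Teller conformal block at `c = 1`:
the Fourier-type kernel `F₁(ρ,σ) = 2^{4σ²−4ρ²+1)·cos(2πσρ)` intertwines the s- and
t-channel blocks in the elliptic parameterization. -/
theorem ashkin_teller_fusion (τ σ : ℂ) (hτ : 0 < τ.im) :
    (2 : ℂ) ^ (4 * σ ^ 2) * Complex.exp (I * (π : ℂ) * σ ^ 2 * τ) / jacobiTheta τ =
    ∫ ρ : ℝ in Set.Ioi (0 : ℝ),
      (2 : ℂ) ^ (4 * σ ^ 2 - 4 * (ρ : ℂ) ^ 2 + 1) * Complex.cos (2 * (π : ℂ) * σ * (ρ : ℂ)) *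
        ((2 : ℂ) ^ (4 * (ρ : ℂ) ^ 2) * Complex.exp (-I * (π : ℂ) * (ρ : ℂ) ^ 2 / τ) /
          jacobiTheta (-1 / τ)) := by
  have hτ0 : τ ≠ 0 := fun h => by simp [h] at hτ
  have hπ0 : ((π : ℂ)) ≠ 0 := Complex.ofReal_ne_zero.mpr Real.pi_ne_zero
  set b : ℂ := -I * (π : ℂ) / τ with hbdef
  have hb : b.re < 0 := by
    rw [hbdef, Complex.div_re]
    have h1 : (-I * (π:ℂ)).re = 0 := by simp
    have h2 : (-I * (π:ℂ)).im = -π := by simp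
    rw [h1, h2, zero_mul, zero_div, zero_add]
    exact div_neg_of_neg_of_pos (mul_neg_of_neg_of_pos (neg_neg_iff_pos.mpr Real.pi_pos) hτ)
      (Complex.normSq_pos.mpr hτ0)
  set c : ℂ := 2 * (π : ℂ) * σ * I with hcdef
  -- the Gaussian integrand
  set g : ℝ → ℂ := fun ρ => Complex.cos (2 * (π:ℂ) * σ * ρ) * Complex.exp (b * ρ ^ 2) with hgdef
  have hgsplit : ∀ ρ : ℝ, g ρ =
      (Complex.exp (b * ρ ^ 2 + c * ρ + 0) + Complex.exp (b * ρ ^ 2 + -c * ρ + 0)) / 2 := by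
    intro ρ
    rw [hgdef]
    simp only [Complex.cos, div_mul_eq_mul_div, add_mul, ← Complex.exp_add]
    congr 3 <;> rw [hcdef] <;> ring
  -- integrability of g
  have hgint : Integrable g := by
    have h1 := integrable_cexp_quadratic' hb c 0
    have h2 := integrable_cexp_quadratic' hb (-c) 0
    have := (h1.add h2).div_const 2
    exact this.congr (by filter_upwards with ρ using (hgsplit ρ).symm)
  -- evenness of g
  have hgeven : ∀ ρ : ℝ, g (-ρ) = g ρ := by
    intro ρ
    rw [hgdef]
    push_cast
    rw [mul_neg, Complex.cos_neg, neg_sq]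
  -- the Gaussian integral
  have key : ∫ ρ : ℝ, g ρ = (-I * τ) ^ (1/2 : ℂ) * Complex.exp (I * (π:ℂ) * σ ^ 2 * τ) := by
    have h1 := integral_cexp_quadratic hb c 0
    have h2 := integral_cexp_quadratic hb (-c) 0
    have h1' := integrable_cexp_quadratic' hb c 0
    have h2' := integrable_cexp_quadratic' hb (-c) 0
    have hA : (π:ℂ) / -b = -I * τ := by
      rw [hbdef]
      field_simp
      linear_combination Complex.I_sq
    have hB : (0:ℂ) - c ^ 2 / (4 * b) = I * (π:ℂ) * σ ^ 2 * τ := by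
      rw [hcdef, hbdef]
      field_simp
      ring_nf
    calc ∫ ρ : ℝ, g ρ
        = ∫ ρ : ℝ, (Complex.exp (b * ρ ^ 2 + c * ρ + 0)
            + Complex.exp (b * ρ ^ 2 + -c * ρ + 0)) / 2 := by simp_rw [hgsplit]
      _ = ((∫ ρ : ℝ, Complex.exp (b * ρ ^ 2 + c * ρ + 0))
            + ∫ ρ : ℝ, Complex.exp (b * ρ ^ 2 + -c * ρ + 0)) / 2 := by
          rw [integral_div, integral_add h1' h2']
      _ = ((π:ℂ) / -b) ^ (1/2 : ℂ) * Complex.exp (0 - c ^ 2 / (4 * b)) := by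
          rw [h1, h2, neg_pow, even_two.neg_pow]
          ring
      _ = (-I * τ) ^ (1/2 : ℂ) * Complex.exp (I * (π:ℂ) * σ ^ 2 * τ) := by
          rw [hA, hB]
  -- the modular transformation of the theta function
  have hS : jacobiTheta (-1 / τ) = (-I * τ) ^ (1/2 : ℂ) * jacobiTheta τ := by
    have := jacobiTheta_S_smul ⟨τ, hτ⟩
    rw [UpperHalfPlane.modular_S_smul] at this
    simpa [neg_div, one_div, inv_neg] using this
  have hroot : (-I * τ) ^ (1/2 : ℂ) ≠ 0 := by
    rw [Ne, Complex.cpow_eq_zero_iff, not_and_or]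
    exact Or.inl (mul_ne_zero (neg_ne_zero.mpr Complex.I_ne_zero) hτ0)
  -- rewrite the integrand
  have hintegrand : ∀ ρ : ℝ,
      (2 : ℂ) ^ (4 * σ ^ 2 - 4 * (ρ : ℂ) ^ 2 + 1) * Complex.cos (2 * (π : ℂ) * σ * (ρ : ℂ)) *
        ((2 : ℂ) ^ (4 * (ρ : ℂ) ^ 2) * Complex.exp (-I * (π : ℂ) * (ρ : ℂ) ^ 2 / τ) /
          jacobiTheta (-1 / τ)) =
      (2 : ℂ) ^ (4 * σ ^ 2) / jacobiTheta (-1 / τ) * (2 * g ρ) := by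
    intro ρ
    have hexp : Complex.exp (-I * (π : ℂ) * (ρ : ℂ) ^ 2 / τ) = Complex.exp (b * ρ ^ 2) := by
      rw [hbdef]; ring_nf
    have hpow : (2 : ℂ) ^ (4 * σ ^ 2 - 4 * (ρ : ℂ) ^ 2 + 1) * (2 : ℂ) ^ (4 * (ρ : ℂ) ^ 2) =
        (2 : ℂ) ^ (4 * σ ^ 2) * 2 := by
      rw [← Complex.cpow_add _ _ (two_ne_zero)]
      have : 4 * σ ^ 2 - 4 * (ρ : ℂ) ^ 2 + 1 + 4 * (ρ : ℂ) ^ 2 = 4 * σ ^ 2 + 1 := by ring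
      rw [this, Complex.cpow_add _ _ (two_ne_zero), Complex.cpow_one]
    simp only [hgdef]
    rw [hexp]
    linear_combination Complex.cos (2 * (π:ℂ) * σ * (ρ:ℂ)) * Complex.exp (b * (ρ:ℂ) ^ 2) /
      jacobiTheta (-1 / τ) * hpow
  simp_rw [hintegrand]
  rw [MeasureTheory.integral_const_mul, MeasureTheory.integral_const_mul,
    ← even_integral_aux hgint hgeven, key, hS]
  rcases eq_or_ne (jacobiTheta τ) 0 with h | h
  · simp [h]
  · field_simp
end

section
/- (Fusion check for Zamolodchikov's c = 25 conformal block.) For every τ ∈ ℂ with Im τ > 0 and every σ ∈ ℂ with σ ≠ 0: 2^{4σ²}·e^{iπσ²τ} / θ₃(τ)³ = ∫_{0}^{∞} (2^{4σ²}/σ)·2·sin(2πσρ)·ρ · e^{−iπρ²/τ} / θ₃(−1/τ)³ dρ, where the integral is over real ρ ∈ (0,∞). Equivalently, the kernel F₂₅(ρ,σ) = (2^{−4σ²}σ)^{−1}·2 sin(2πσρ)·(2^{−4ρ²}ρ) intertwines the s- and t-channel c = 25 blocks with all external momenta i/4 in the elliptic parameterization. -/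
open Complex Real

open MeasureTheory Set Filter

lemma aux_tendsto (b c : ℂ) (hb : 0 < b.re) :
    Tendsto (fun x : ℝ => Complex.exp (-b * x ^ 2 + c * x)) atTop (nhds 0) := by
  rw [tendsto_zero_iff_norm_tendsto_zero]
  have h1 : ∀ x : ℝ, ‖Complex.exp (-b * x ^ 2 + c * x)‖ = rexp (-b.re * x ^ 2 + c.re * x) := by
    intro x
    rw [Complex.norm_exp]
    congr 1
    simp [Complex.add_re, Complex.mul_re, ← Complex.ofReal_pow]
  simp_rw [h1]
  have h2 : Tendsto (fun x : ℝ => -b.re * x ^ 2 + c.re * x) atTop atBot := by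
    refine tendsto_atBot_mono' atTop ?_ (tendsto_neg_atBot_iff.mpr tendsto_id)
    filter_upwards [eventually_ge_atTop (1 : ℝ), eventually_ge_atTop ((c.re + 1) / b.re)] with x hx1 hx2
    have hbx : c.re + 1 ≤ b.re * x := by
      rw [div_le_iff₀ hb] at hx2; linarith
    have h3 := mul_le_mul_of_nonneg_right hbx (by linarith : (0:ℝ) ≤ x)
    simp only [id]
    nlinarith [h3]
  exact Real.tendsto_exp_atBot.comp h2

lemma aux_integrable (b c : ℂ) (hb : 0 < b.re) :
    Integrable (fun x : ℝ => Complex.exp (-b * x ^ 2 + c * x)) := by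
  simpa using integrable_cexp_quadratic hb c 0

lemma aux_integrable_mul (b c : ℂ) (hb : 0 < b.re) :
    Integrable (fun x : ℝ => (x : ℂ) * Complex.exp (-b * x ^ 2 + c * x)) := by
  have hmeas : AEStronglyMeasurable (fun x : ℝ => (x : ℂ) * Complex.exp (-b * x ^ 2 + c * x)) volume := by
    apply Continuous.aestronglyMeasurable
    continuity
  have hg : Integrable (fun x : ℝ =>
      ‖Complex.exp (-(b.re : ℂ) * x ^ 2 + ((c.re + 1 : ℝ) : ℂ) * x)‖ +
      ‖Complex.exp (-(b.re : ℂ) * x ^ 2 + ((c.re - 1 : ℝ) : ℂ) * x)‖) :=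
    ((aux_integrable _ _ (by simpa using hb)).norm).add ((aux_integrable _ _ (by simpa using hb)).norm)
  refine hg.mono' hmeas ?_
  filter_upwards with x
  have hn : ∀ d e : ℂ, ‖Complex.exp (-d * x ^ 2 + e * x)‖ = rexp (-d.re * x ^ 2 + e.re * x) := by
    intro d e
    rw [Complex.norm_exp]
    congr 1
    simp [Complex.add_re, Complex.mul_re, ← Complex.ofReal_pow]
  rw [norm_mul, hn b c, hn ((b.re : ℝ) : ℂ) (((c.re + 1 : ℝ)) : ℂ),
    hn ((b.re : ℝ) : ℂ) (((c.re - 1 : ℝ)) : ℂ)]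
  simp only [Complex.ofReal_re, Complex.norm_real, Real.norm_eq_abs]
  have habs : |x| ≤ rexp x + rexp (-x) := by
    rcases abs_cases x with ⟨h1, h2⟩ | ⟨h1, h2⟩ <;> rw [h1] <;>
      linarith [Real.add_one_le_exp x, Real.add_one_le_exp (-x), Real.exp_pos x, Real.exp_pos (-x)]
  calc |x| * rexp (-b.re * x ^ 2 + c.re * x)
      ≤ (rexp x + rexp (-x)) * rexp (-b.re * x ^ 2 + c.re * x) :=
        mul_le_mul_of_nonneg_right habs (Real.exp_pos _).le
    _ = rexp (-b.re * x ^ 2 + (c.re + 1) * x) + rexp (-b.re * x ^ 2 + (c.re - 1) * x) := by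
        rw [add_mul, ← Real.exp_add, ← Real.exp_add]
        ring_nf

lemma aux_hasDeriv (b c : ℂ) (x : ℝ) :
    HasDerivAt (fun x : ℝ => Complex.exp (-b * x ^ 2 + c * x))
      ((-2 * b * x + c) * Complex.exp (-b * x ^ 2 + c * x)) x := by
  have h1 : HasDerivAt (fun z : ℂ => -b * z ^ 2 + c * z) (-2 * b * x + c) (x : ℂ) := by
    have := (((hasDerivAt_pow 2 (x : ℂ)).const_mul (-b)).add ((hasDerivAt_id (x : ℂ)).const_mul c))
    exact this.congr_deriv (by push_cast; ring)
  have h2 := h1.cexp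
  have h3 : HasDerivAt (fun z : ℂ => Complex.exp (-b * z ^ 2 + c * z))
      ((-2 * b * x + c) * Complex.exp (-b * (x:ℂ) ^ 2 + c * x)) (x : ℂ) := by
    exact h2.congr_deriv (by ring)
  exact h3.comp_ofReal

lemma key_integral (b a : ℂ) (hb : 0 < b.re) :
    ∫ x in Ioi (0:ℝ), (-I) * x * (Complex.exp (-b * x ^ 2 + I * a * x)
        - Complex.exp (-b * x ^ 2 - I * a * x))
      = a / (2 * b) * ((π / b) ^ (1/2 : ℂ) * Complex.exp (-a ^ 2 / (4 * b))) := by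
  have hb0 : b ≠ 0 := fun h => by simp [h] at hb
  set E : ℂ → ℝ → ℂ := fun c x => Complex.exp (-b * x ^ 2 + c * x) with hE
  set f : ℝ → ℂ := fun x => (-I / (2 * b)) * (E (-(I * a)) x - E (I * a) x) with hf
  set g : ℝ → ℂ := fun x => (-I) * x * (E (I * a) x - E (-(I * a)) x) with hg
  set h : ℝ → ℂ := fun x => a / (2 * b) * (E (I * a) x + E (-(I * a)) x) with hh
  have hgoal : ∫ x in Ioi (0:ℝ), (-I) * x * (Complex.exp (-b * x ^ 2 + I * a * x)
      - Complex.exp (-b * x ^ 2 - I * a * x)) = ∫ x in Ioi (0:ℝ), g x := by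
    congr 1; ext x; simp only [hg, hE]; ring_nf
  rw [hgoal]
  -- derivative of f
  have hderiv : ∀ x : ℝ, HasDerivAt f (g x - h x) x := by
    intro x
    have h1 := ((aux_hasDeriv b (-(I * a)) x).sub (aux_hasDeriv b (I * a) x)).const_mul
      (-I / (2 * b))
    refine h1.congr_deriv (Eq.symm ?_)
    simp only [hg, hh, hE]
    field_simp
    ring_nf
    simp only [Complex.I_sq]
    ring_nf
  -- integrability
  have hgi : Integrable g := by
    have := ((aux_integrable_mul b (I * a) hb).sub (aux_integrable_mul b (-(I * a)) hb)).const_mul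
      (-I)
    exact this.congr (Filter.Eventually.of_forall fun x => by simp only [Pi.sub_apply, hg, hE]; ring_nf)
  have hhi : Integrable h := by
    have := ((aux_integrable b (I * a) hb).add (aux_integrable b (-(I * a)) hb)).const_mul
      (a / (2 * b))
    exact this.congr (Filter.Eventually.of_forall fun x => rfl)
  have hghi : Integrable (fun x => g x - h x) := hgi.sub hhi
  -- tendsto
  have htend : Filter.Tendsto f Filter.atTop (nhds 0) := by
    have := ((aux_tendsto b (-(I * a)) hb).sub (aux_tendsto b (I * a) hb)).const_mul (-I / (2 * b))
    simp only [sub_zero, mul_zero] at this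
    exact this
  have hf0 : f 0 = 0 := by simp [hf, hE]
  have hcont : ContinuousWithinAt f (Ici (0:ℝ)) 0 :=
    (Continuous.continuousWithinAt (by simp only [hf, hE]; fun_prop))
  have hint1 : ∫ x in Ioi (0:ℝ), (g x - h x) = 0 - f 0 :=
    integral_Ioi_of_hasDerivAt_of_tendsto hcont (fun x _ => hderiv x)
      hghi.integrableOn htend
  -- evenness of h
  have heven : ∀ x : ℝ, h (-x) = h x := by
    intro x
    simp only [hh, hE, Complex.ofReal_neg]
    ring_nf
  have hIic : ∫ x in Iic (0:ℝ), h x = ∫ x in Ioi (0:ℝ), h x := by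
    rw [show (0:ℝ) = -0 by norm_num, ← integral_comp_neg_Ioi]
    simp only [heven, neg_zero]
  have hsplit : (∫ x in Iic (0:ℝ), h x) + ∫ x in Ioi (0:ℝ), h x = ∫ x : ℝ, h x :=
    intervalIntegral.integral_Iic_add_Ioi hhi.integrableOn hhi.integrableOn
  -- full-line Gaussian integrals
  have hEp : ∫ x : ℝ, E (I * a) x = (π / b) ^ (1/2 : ℂ) * Complex.exp (-a ^ 2 / (4 * b)) := by
    rw [← fourierIntegral_gaussian hb a]
    congr 1; ext x; simp only [hE]; rw [← Complex.exp_add]; congr 1; ring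
  have hEm' : ∫ x : ℝ, E (-(I * a)) x = (π / b) ^ (1/2 : ℂ) * Complex.exp (-a ^ 2 / (4 * b)) := by
    have h4 : -(-a) ^ 2 / (4 * b) = -a ^ 2 / (4 * b) := by ring
    rw [show ∫ x : ℝ, E (-(I * a)) x
        = ∫ x : ℝ, Complex.exp (I * (-a) * x) * Complex.exp (-b * x ^ 2) from ?_]
    · rw [fourierIntegral_gaussian hb (-a), h4]
    · congr 1; ext x; simp only [hE]; rw [← Complex.exp_add]; congr 1; ring
  have hhval : ∫ x : ℝ, h x
      = a / (2 * b) * ((π / b) ^ (1/2 : ℂ) * Complex.exp (-a ^ 2 / (4 * b)) * 2) := by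
    simp only [hh]
    rw [MeasureTheory.integral_const_mul, integral_add (aux_integrable b (I * a) hb)
      (aux_integrable b (-(I * a)) hb), hEp, hEm']
    ring
  -- assemble
  have e1 : ∫ x in Ioi (0:ℝ), g x
      = (∫ x in Ioi (0:ℝ), (g x - h x)) + ∫ x in Ioi (0:ℝ), h x := by
    rw [← integral_add hghi.integrableOn hhi.integrableOn]
    congr 1; ext x; ring
  have e2 : ∫ x in Ioi (0:ℝ), h x
      = a / (2 * b) * ((π / b) ^ (1/2 : ℂ) * Complex.exp (-a ^ 2 / (4 * b))) := by
    have h2 : (2:ℂ) * ∫ x in Ioi (0:ℝ), h x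
        = a / (2 * b) * ((π / b) ^ (1/2 : ℂ) * Complex.exp (-a ^ 2 / (4 * b)) * 2) := by
      rw [← hhval, ← hsplit, hIic]; ring
    linear_combination h2 / 2
  rw [e1, hint1, hf0, e2]
  ring

/-- fusion check for Zamolodchikov's `c = 25` conformal block:
the kernel `F₂₅(ρ,σ) = (2^{−4σ²}σ)⁻¹·2 sin(2πσρ)·(2^{−4ρ²}ρ)` intertwines the s- and
t-channel `c = 25` blocks with all external momenta `i/4` in the elliptic
parameterization. -/
theorem zamolodchikov_c25_fusion (τ σ : ℂ) (hτ : 0 < τ.im) (hσ : σ ≠ 0) :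
    (2 : ℂ) ^ (4 * σ ^ 2) * Complex.exp (I * (π : ℂ) * σ ^ 2 * τ) / jacobiTheta τ ^ 3 =
    ∫ ρ : ℝ in Set.Ioi (0 : ℝ),
      ((2 : ℂ) ^ (4 * σ ^ 2) / σ) * 2 * Complex.sin (2 * (π : ℂ) * σ * (ρ : ℂ)) * (ρ : ℂ) *
        Complex.exp (-I * (π : ℂ) * (ρ : ℂ) ^ 2 / τ) / jacobiTheta (-1 / τ) ^ 3 := by
  have hτ0 : τ ≠ 0 := fun h => by simp [h] at hτ
  have hπ : ((π : ℝ) : ℂ) ≠ 0 := Complex.ofReal_ne_zero.mpr Real.pi_ne_zero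
  have hbase : -I * τ ≠ 0 := mul_ne_zero (neg_ne_zero.mpr I_ne_zero) hτ0
  -- functional equation
  have hcoe : ((ModularGroup.S • UpperHalfPlane.mk τ hτ : UpperHalfPlane) : ℂ) = -1 / τ := by
    rw [UpperHalfPlane.modular_S_smul]
    simp [UpperHalfPlane.coe_mk, inv_neg, neg_div, one_div]
  have hS : jacobiTheta (-1 / τ) = (-I * τ) ^ (1 / 2 : ℂ) * jacobiTheta τ := by
    have h := jacobiTheta_S_smul (UpperHalfPlane.mk τ hτ)
    rwa [hcoe] at h
  by_cases hθ : jacobiTheta τ = 0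
  · simp [hS, hθ]
  -- setup
  have hbre : 0 < (I * (π : ℂ) / τ).re := by
    have h1 : 0 < Complex.normSq τ := Complex.normSq_pos.mpr hτ0
    simp only [Complex.div_re, Complex.mul_re, Complex.mul_im, Complex.I_re, Complex.I_im,
      Complex.ofReal_re, Complex.ofReal_im]
    ring_nf
    positivity
  have key := key_integral (I * (π : ℂ) / τ) (2 * (π : ℂ) * σ) hbre
  set s : ℂ := (-I * τ) ^ (1 / 2 : ℂ) with hs_def
  have hsne : s ≠ 0 := by
    rw [hs_def, Ne, Complex.cpow_eq_zero_iff, not_and_or]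
    exact Or.inl hbase
  have hs2 : s * s = -I * τ := by
    rw [hs_def, ← Complex.cpow_add _ _ hbase]
    norm_num
  -- rewrite integrand
  have hpt : ∀ x : ℝ, ((2 : ℂ) ^ (4 * σ ^ 2) / σ) * 2 * Complex.sin (2 * (π : ℂ) * σ * (x : ℂ)) *
        (x : ℂ) * Complex.exp (-I * (π : ℂ) * (x : ℂ) ^ 2 / τ) / jacobiTheta (-1 / τ) ^ 3
      = (((2 : ℂ) ^ (4 * σ ^ 2) / σ) / jacobiTheta (-1 / τ) ^ 3) *
        ((-I) * (x : ℂ) * (Complex.exp (-(I * (π : ℂ) / τ) * (x : ℂ) ^ 2 + I * (2 * (π : ℂ) * σ) * (x : ℂ))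
          - Complex.exp (-(I * (π : ℂ) / τ) * (x : ℂ) ^ 2 - I * (2 * (π : ℂ) * σ) * (x : ℂ)))) := by
    intro x
    simp only [Complex.sin, sub_eq_add_neg, Complex.exp_add]
    ring_nf
  rw [show (∫ ρ : ℝ in Ioi (0:ℝ),
        ((2 : ℂ) ^ (4 * σ ^ 2) / σ) * 2 * Complex.sin (2 * (π : ℂ) * σ * (ρ : ℂ)) * (ρ : ℂ) *
          Complex.exp (-I * (π : ℂ) * (ρ : ℂ) ^ 2 / τ) / jacobiTheta (-1 / τ) ^ 3)
      = ∫ ρ : ℝ in Ioi (0:ℝ), (((2 : ℂ) ^ (4 * σ ^ 2) / σ) / jacobiTheta (-1 / τ) ^ 3) *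
        ((-I) * (ρ : ℂ) * (Complex.exp (-(I * (π : ℂ) / τ) * (ρ : ℂ) ^ 2 + I * (2 * (π : ℂ) * σ) * (ρ : ℂ))
          - Complex.exp (-(I * (π : ℂ) / τ) * (ρ : ℂ) ^ 2 - I * (2 * (π : ℂ) * σ) * (ρ : ℂ))))
      from by congr 1; ext x; exact hpt x]
  rw [MeasureTheory.integral_const_mul, key]
  have h1 : ((π : ℂ)) / (I * (π : ℂ) / τ) = -I * τ := by
    field_simp
    linear_combination Complex.I_sq
  have h2 : -(2 * (π : ℂ) * σ) ^ 2 / (4 * (I * (π : ℂ) / τ)) = I * (π : ℂ) * σ ^ 2 * τ := by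
    field_simp
    linear_combination (-4 : ℂ) * Complex.I_sq
  have h3 : (2 * (π : ℂ) * σ) / (2 * (I * (π : ℂ) / τ)) = -I * σ * τ := by
    field_simp
    linear_combination Complex.I_sq
  rw [h1, h2, h3, ← hs_def, hS]
  field_simp
  linear_combination hs2
end

section
/- (Existence part of the Lemma on the symmetrized connection coefficient.) Let θ0, θt, θ1, θ∞, σ0t, σ1t ∈ ℂ be such that none of the numbers θt±θ0±σ0t, θ1±θ∞±σ0t, θt±θ1±σ1t, θ0±θ∞±σ1t (all sign choices) is an integer. Define κ(σ0t,σ1t) = ∏_{ε,ε'=±} [Ĝ(θt+εθ0+ε'σ0t)·Ĝ(θ1+εθ∞+ε'σ0t)] / [Ĝ(θt+εθ1+ε'σ1t)·Ĝ(θ0+εθ∞+ε'σ1t)]. Then κ satisfies the two recurrence relations: κ(σ0t+1,σ1t)·∏_{ε=±} sin π(θt+σ0t+εθ0)·sin π(θ1+σ0t+εθ∞) = κ(σ0t,σ1t)·∏_{ε=±} sin π(θt−σ0t+εθ0)·sin π(θ1−σ0t+εθ∞), and κ(σ0t,σ1t+1)·∏_{ε=±} sin π(θt−σ1t+εθ1)·sin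 π(θ0−σ1t+εθ∞) = κ(σ0t,σ1t)·∏_{ε=±} sin π(θt+σ1t+εθ1)·sin π(θ0+σ1t+εθ∞). -/
open Complex Real

/-- The Barnes G-function, defined by the everywhere-convergent Weierstrass product
`G(1+z) = (2π)^{z/2}·exp(−(z+z²(1+γ))/2)·∏_{n≥1} (1+z/n)ⁿ·exp(z²/(2n) − z)`. -/
noncomputable def barnesG (w : ℂ) : ℂ :=
  (2 * (π : ℂ)) ^ ((w - 1) / 2) *
    Complex.exp (-((w - 1) + (w - 1) ^ 2 * (1 + (Real.eulerMascheroniConstant : ℂ))) / 2) *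
    ∏' n : ℕ, ((1 + (w - 1) / ((n : ℂ) + 1)) ^ (n + 1) *
      Complex.exp ((w - 1) ^ 2 / (2 * ((n : ℂ) + 1)) - (w - 1)))

/-- `Ĝ(σ) = G(1+σ)/G(1−σ)`. -/
noncomputable def GHat (σ : ℂ) : ℂ := barnesG (1 + σ) / barnesG (1 - σ)

section BarnesAux
open Filter Finset Topology

noncomputable def pref (z : ℂ) : ℂ :=
  (2 * (Real.pi : ℂ)) ^ (z / 2) *
    Complex.exp (-(z + z ^ 2 * (1 + (Real.eulerMascheroniConstant : ℂ))) / 2)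

noncomputable def fac (n : ℕ) (z : ℂ) : ℂ :=
  (1 + z / ((n : ℂ) + 1)) ^ (n + 1) * Complex.exp (z ^ 2 / (2 * ((n : ℂ) + 1)) - z)

noncomputable def lterm (n : ℕ) (z : ℂ) : ℂ :=
  ((n : ℂ) + 1) * Complex.log (1 + z / ((n : ℂ) + 1)) + z ^ 2 / (2 * ((n : ℂ) + 1)) - z

lemma logTaylor_three (z : ℂ) : Complex.logTaylor 3 z = z - z ^ 2 / 2 := by
  simp [Complex.logTaylor_succ, Complex.logTaylor_zero]
  ring

lemma cubic_log_bound {z : ℂ} (hz : ‖z‖ ≤ 1 / 2) :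
    ‖Complex.log (1 + z) - z + z ^ 2 / 2‖ ≤ ‖z‖ ^ 3 := by
  have h1 : ‖z‖ < 1 := lt_of_le_of_lt hz (by norm_num)
  have h := Complex.norm_log_sub_logTaylor_le 2 h1
  rw [logTaylor_three] at h
  norm_num at h
  have h2 : Complex.log (1 + z) - z + z ^ 2 / 2 = Complex.log (1 + z) - (z - z ^ 2 / 2) := by ring
  rw [h2]
  refine h.trans ?_
  have h3 : (1 - ‖z‖)⁻¹ ≤ 2 := by
    rw [inv_le_comm₀ (by linarith) (by norm_num)]
    linarith
  have h4 : (0:ℝ) ≤ ‖z‖ ^ 3 := by positivity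
  calc ‖z‖ ^ 3 * (1 - ‖z‖)⁻¹ / 3 ≤ ‖z‖ ^ 3 * 2 / 3 := by gcongr
    _ ≤ ‖z‖ ^ 3 := by linarith

lemma ncast_ne (n : ℕ) : ((n : ℂ) + 1) ≠ 0 := by
  exact_mod_cast Nat.succ_ne_zero n

lemma norm_ncast (n : ℕ) : ‖((n:ℂ)+1)‖ = (n:ℝ)+1 := by
  rw [show ((n:ℂ)+1) = ((n+1:ℕ):ℂ) by push_cast; ring, Complex.norm_natCast]
  push_cast; ring

lemma lterm_eq (n : ℕ) (z : ℂ) :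
    lterm n z = ((n : ℂ) + 1) *
      (Complex.log (1 + z / ((n:ℂ)+1)) - z / ((n:ℂ)+1) + (z / ((n:ℂ)+1)) ^ 2 / 2) := by
  have hn := ncast_ne n
  unfold lterm
  field_simp
  ring

lemma norm_lterm_le (z : ℂ) (n : ℕ) (h : ‖z‖ ≤ ((n:ℝ)+1) / 2) :
    ‖lterm n z‖ ≤ ‖z‖ ^ 3 * (1 / ((n:ℝ)+1) ^ 2) := by
  have hn : (0:ℝ) < (n:ℝ) + 1 := by positivity
  have hw : ‖z / ((n:ℂ)+1)‖ ≤ 1/2 := by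
    rw [norm_div, norm_ncast, div_le_iff₀ hn]
    linarith
  rw [lterm_eq n z, norm_mul, norm_ncast]
  calc ((n:ℝ)+1) * ‖_‖ ≤ ((n:ℝ)+1) * ‖z/((n:ℂ)+1)‖^3 := by
        gcongr
        exact cubic_log_bound hw
    _ = ‖z‖^3 * (1/((n:ℝ)+1)^2) := by
        rw [norm_div, norm_ncast]
        field_simp

lemma summable_lterm (z : ℂ) : Summable (fun n => lterm n z) := by
  have hb : Summable (fun n : ℕ => ‖z‖ ^ 3 * (1 / ((n:ℝ)+1) ^ 2)) := by
    apply Summable.mul_left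
    have h2 : Summable (fun n : ℕ => 1 / ((n:ℝ)) ^ 2) := by
      simpa using Real.summable_one_div_nat_pow.mpr one_lt_two
    have := (summable_nat_add_iff (f := fun n : ℕ => 1 / (n:ℝ) ^ 2) 1).mpr h2
    simpa [Nat.cast_add] using this
  apply Summable.of_norm_bounded_eventually_nat hb
  filter_upwards [eventually_ge_atTop ⌈2 * ‖z‖⌉₊] with n hn
  apply norm_lterm_le
  have : 2 * ‖z‖ ≤ (n:ℝ) := le_trans (Nat.le_ceil _) (by exact_mod_cast hn)
  linarith

lemma fac_eq_exp (n : ℕ) (z : ℂ) (h : 1 + z / ((n:ℂ)+1) ≠ 0) :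
    fac n z = Complex.exp (lterm n z) := by
  unfold fac lterm
  rw [show ((n:ℂ)+1) * Complex.log (1 + z/((n:ℂ)+1)) + z^2/(2*((n:ℂ)+1)) - z
      = ((n+1:ℕ):ℂ) * Complex.log (1 + z/((n:ℂ)+1)) + (z^2/(2*((n:ℂ)+1)) - z) by push_cast; ring,
    Complex.exp_add, Complex.exp_nat_mul, Complex.exp_log h]

lemma hasProd_fac (z : ℂ) (hz : ∀ n : ℕ, 1 + z / ((n:ℂ)+1) ≠ 0) :
    HasProd (fun n => fac n z) (Complex.exp (∑' n, lterm n z)) := by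
  have hs : HasSum (fun n => lterm n z) (∑' n, lterm n z) := (summable_lterm z).hasSum
  have := (Complex.continuous_exp.tendsto _).comp hs
  unfold HasProd
  apply this.congr
  intro s
  simp only [Function.comp]
  rw [Complex.exp_sum]
  exact Finset.prod_congr rfl fun n _ => (fac_eq_exp n z (hz n)).symm

noncomputable def hsum (N : ℕ) : ℂ := ∑ k ∈ Finset.range N, (1 / ((k:ℂ)+1))

lemma prod_shift (z : ℂ) (N : ℕ) :
    (∏ n ∈ Finset.range N, fac n (z+1)) * (∏ k ∈ Finset.range N, (z + 1 + (k:ℂ))) =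
    (∏ n ∈ Finset.range N, fac n z) * ((N:ℂ) + 1 + z) ^ N *
      Complex.exp ((z + 1/2) * hsum N - N) := by
  induction N with
  | zero => simp [hsum]
  | succ N ih =>
    rw [Finset.prod_range_succ, Finset.prod_range_succ, Finset.prod_range_succ,
      show hsum (N+1) = hsum N + 1/((N:ℂ)+1) by
        unfold hsum; rw [Finset.sum_range_succ]]
    have hc := ncast_ne N
    -- rearrange to use ih
    have key : fac N (z+1) * (z + 1 + (N:ℂ)) * (((N:ℂ)+1+z)^N * Complex.exp ((z+1/2)*hsum N - N)) =
        fac N z * (((N+1:ℕ):ℂ)+1+z)^(N+1) * Complex.exp ((z+1/2)*(hsum N + 1/((N:ℂ)+1)) - ((N:ℕ)+1:ℂ)) := by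
      unfold fac
      push_cast
      rw [show ((N:ℂ)+1+1+z) = ((N:ℂ)+2+z) by ring]
      have e1 : (1 + (z+1)/((N:ℂ)+1)) = ((N:ℂ)+2+z) / ((N:ℂ)+1) := by field_simp; ring
      have e2 : (1 + z/((N:ℂ)+1)) = ((N:ℂ)+1+z) / ((N:ℂ)+1) := by field_simp; try ring
      have e3 : Complex.exp ((z+1)^2/(2*((N:ℂ)+1)) - (z+1))
          = Complex.exp (z^2/(2*((N:ℂ)+1)) - z) * Complex.exp ((z+1/2)/((N:ℂ)+1) - 1) := by
        rw [← Complex.exp_add]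
        congr 1
        field_simp
        ring
      have e4 : Complex.exp ((z+1/2)*(hsum N + 1/((N:ℂ)+1)) - ((N:ℂ)+1))
          = Complex.exp ((z+1/2)*hsum N - (N:ℂ)) * Complex.exp ((z+1/2)/((N:ℂ)+1) - 1) := by
        rw [← Complex.exp_add]
        congr 1
        field_simp
        ring
      rw [e1, e2, e3, e4, div_pow, div_pow,
        pow_succ ((N:ℂ)+2+z), pow_succ ((N:ℂ)+1+z), pow_succ ((N:ℂ)+1)]
      field_simp
      ring
    calc (∏ n ∈ Finset.range N, fac n (z+1)) * fac N (z+1) *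
          ((∏ k ∈ Finset.range N, (z+1+(k:ℂ))) * (z+1+(N:ℂ)))
        = ((∏ n ∈ Finset.range N, fac n (z+1)) * (∏ k ∈ Finset.range N, (z+1+(k:ℂ)))) *
          (fac N (z+1) * (z+1+(N:ℂ))) := by ring
      _ = ((∏ n ∈ Finset.range N, fac n z) * ((N:ℂ)+1+z)^N * Complex.exp ((z+1/2)*hsum N - N)) *
          (fac N (z+1) * (z+1+(N:ℂ))) := by rw [ih]
      _ = (∏ n ∈ Finset.range N, fac n z) *
          (fac N (z+1) * (z + 1 + (N:ℂ)) * (((N:ℂ)+1+z)^N * Complex.exp ((z+1/2)*hsum N - N))) := by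
          ring
      _ = _ := by
          rw [key]
          push_cast
          ring

lemma tendsto_natlog (w : ℂ) :
    Tendsto (fun N : ℕ => ((N:ℂ)+1) * Complex.log (1 + w/(N:ℂ))) atTop (𝓝 w) := by
  rw [← tendsto_sub_nhds_zero_iff]
  apply squeeze_zero_norm' (a := fun N : ℕ => (2*‖w‖^2 + ‖w‖)/(N:ℝ))
  · filter_upwards [eventually_ge_atTop (⌈2*‖w‖⌉₊ + 1)] with N hN
    have hN0 : (0:ℝ) < (N:ℝ) := by
      have : 1 ≤ N := le_trans (Nat.le_add_left 1 _) hN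
      exact_mod_cast Nat.lt_of_lt_of_le Nat.zero_lt_one this
    have h2w : 2*‖w‖ ≤ (N:ℝ) := by
      have : (⌈2*‖w‖⌉₊ : ℝ) ≤ (N:ℝ) := by exact_mod_cast le_trans (Nat.le_add_right _ 1) hN
      exact le_trans (Nat.le_ceil _) this
    have hu : ‖w/(N:ℂ)‖ ≤ 1/2 := by
      rw [norm_div, Complex.norm_natCast, div_le_iff₀ hN0]
      linarith
    have hu1 : ‖w/(N:ℂ)‖ < 1 := lt_of_le_of_lt hu (by norm_num)
    have hlog := Complex.norm_log_one_add_sub_self_le hu1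
    have hinv : (1 - ‖w/(N:ℂ)‖)⁻¹ ≤ 2 := by
      rw [inv_le_comm₀ (by linarith) (by norm_num)]
      linarith
    have key : ((N:ℂ)+1) * Complex.log (1 + w/(N:ℂ)) - w
        = ((N:ℂ)+1) * (Complex.log (1 + w/(N:ℂ)) - w/(N:ℂ)) + w/(N:ℂ) := by
      have : (N:ℂ) ≠ 0 := by exact_mod_cast hN0.ne'
      field_simp
      ring
    rw [key]
    have hN1 : ‖((N:ℂ)+1)‖ = (N:ℝ)+1 := by
      rw [show ((N:ℂ)+1) = ((N+1:ℕ):ℂ) by push_cast; ring, Complex.norm_natCast]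
      push_cast; ring
    calc ‖((N:ℂ)+1) * (Complex.log (1 + w/(N:ℂ)) - w/(N:ℂ)) + w/(N:ℂ)‖
        ≤ ‖((N:ℂ)+1) * (Complex.log (1 + w/(N:ℂ)) - w/(N:ℂ))‖ + ‖w/(N:ℂ)‖ := norm_add_le _ _
      _ = ((N:ℝ)+1) * ‖Complex.log (1 + w/(N:ℂ)) - w/(N:ℂ)‖ + ‖w‖/(N:ℝ) := by
          rw [norm_mul, hN1, norm_div, Complex.norm_natCast]
      _ ≤ ((N:ℝ)+1) * (‖w/(N:ℂ)‖^2 * 2 / 2) + ‖w‖/(N:ℝ) := by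
          gcongr
          calc ‖Complex.log (1 + w/(N:ℂ)) - w/(N:ℂ)‖ ≤ ‖w/(N:ℂ)‖^2 * (1-‖w/(N:ℂ)‖)⁻¹/2 := hlog
            _ ≤ ‖w/(N:ℂ)‖^2 * 2 / 2 := by gcongr
      _ ≤ (2*‖w‖^2 + ‖w‖)/(N:ℝ) := by
          rw [norm_div, Complex.norm_natCast]
          rw [div_pow]
          have hge1 : 1 ≤ (N:ℝ) := by exact_mod_cast (by omega : 1 ≤ N)
          calc ((N:ℝ)+1) * (‖w‖^2/(N:ℝ)^2*2/2) + ‖w‖/(N:ℝ)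
              ≤ (2*(N:ℝ)) * (‖w‖^2/(N:ℝ)^2*2/2) + ‖w‖/(N:ℝ) :=
                add_le_add_left (mul_le_mul_of_nonneg_right (by linarith) (by positivity)) _
            _ = (2*‖w‖^2 + ‖w‖)/(N:ℝ) := by field_simp
  · exact tendsto_const_div_atTop_nhds_zero_nat _

lemma tendsto_one_add_div (w : ℂ) :
    Tendsto (fun N : ℕ => (1 + w/(N:ℂ))^(N+1)) atTop (𝓝 (Complex.exp w)) := by
  have h := (Complex.continuous_exp.tendsto w).comp (tendsto_natlog w)
  apply h.congr'
  filter_upwards [eventually_gt_atTop ⌈‖w‖⌉₊] with N hN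
  have hNpos : 0 < N := Nat.pos_of_ne_zero (by omega)
  have hN0 : (0:ℝ) < (N:ℝ) := by exact_mod_cast hNpos
  have hwN : ‖w/(N:ℂ)‖ < 1 := by
    rw [norm_div, Complex.norm_natCast, div_lt_one hN0]
    calc ‖w‖ ≤ (⌈‖w‖⌉₊:ℝ) := Nat.le_ceil _
      _ < (N:ℝ) := by exact_mod_cast hN
  have hne : 1 + w/(N:ℂ) ≠ 0 := by
    intro h
    have : w/(N:ℂ) = -1 := by linear_combination h
    rw [this] at hwN
    simp at hwN
  show Complex.exp (((N:ℂ)+1) * Complex.log (1 + w/(N:ℂ))) = (1 + w/(N:ℂ))^(N+1)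
  rw [show ((N:ℂ)+1) = ((N+1:ℕ):ℂ) by push_cast; ring, Complex.exp_nat_mul,
    Complex.exp_log hne]

noncomputable def Efun (z : ℂ) (N : ℕ) : ℂ :=
  ((N:ℂ)+1+z)^(N+1) * Complex.exp ((z+1/2) * hsum N - N) /
    ((N:ℂ)^(z+(1:ℂ)) * (N:ℕ).factorial)

lemma hsum_eq (N : ℕ) : hsum N = (((harmonic N : ℝ) : ℂ)) := by
  unfold hsum
  rw [show ((harmonic N : ℝ)) = ∑ i ∈ Finset.range N, ((i+1:ℕ):ℝ)⁻¹ by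
    rw [harmonic]; push_cast; ring]
  push_cast
  exact Finset.sum_congr rfl fun k _ => by rw [one_div, add_comm]

lemma stirling_inv (N : ℕ) (hN : 1 ≤ N) :
    ((Real.sqrt 2 * Stirling.stirlingSeq N)⁻¹ : ℝ)
      = Real.sqrt N * (N:ℝ)^N * Real.exp (-(N:ℝ)) / (N:ℕ).factorial := by
  have hN0 : (0:ℝ) < (N:ℝ) := by exact_mod_cast hN
  have h1 : Real.sqrt (2*(N:ℝ)) = Real.sqrt 2 * Real.sqrt N := Real.sqrt_mul (by norm_num) _
  have hfac : (0:ℝ) < ((N:ℕ).factorial : ℝ) := by exact_mod_cast (N:ℕ).factorial_pos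
  have hs2 : (0:ℝ) < Real.sqrt 2 := Real.sqrt_pos.mpr (by norm_num)
  have hsN : (0:ℝ) < Real.sqrt N := Real.sqrt_pos.mpr hN0
  have hNN : (0:ℝ) < (N:ℝ)^N := by positivity
  have hexp : (0:ℝ) < Real.exp N := Real.exp_pos _
  rw [Stirling.stirlingSeq, h1, div_pow, Real.exp_one_pow, Real.exp_neg]
  field_simp

lemma Efun_decomp (z : ℂ) (N : ℕ) (hN : 1 ≤ N) :
    Efun z N = (1 + (1+z)/(N:ℂ))^(N+1)
      * Complex.exp ((z+1/2) * (((harmonic N : ℝ) - Real.log N : ℝ) : ℂ))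
      * (((Real.sqrt 2 * Stirling.stirlingSeq N)⁻¹ : ℝ) : ℂ) := by
  have hN0 : (0:ℝ) < (N:ℝ) := by exact_mod_cast hN
  have hNc : ((N:ℂ)) ≠ 0 := by exact_mod_cast hN0.ne'
  set L : ℝ := Real.log N with hL
  have hcpow : (N:ℂ)^(z+(1:ℂ)) = Complex.exp ((z+1) * (L:ℂ)) := by
    rw [Complex.cpow_def_of_ne_zero hNc, ← Complex.natCast_log, mul_comm]
  have hsqrt : ((Real.sqrt N : ℝ) : ℂ) = Complex.exp (-(L:ℂ)/2) * (N:ℂ) := by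
    have h1 : Real.sqrt N = Real.exp (L/2) := by
      rw [Real.sqrt_eq_rpow, Real.rpow_def_of_pos hN0]
      ring_nf
      rw [hL]
    have h2 : ((N:ℂ)) = ((Real.exp L : ℝ) : ℂ) := by
      exact_mod_cast congrArg Complex.ofReal (Real.exp_log hN0).symm
    rw [h1, h2, Complex.ofReal_exp, Complex.ofReal_exp, ← Complex.exp_add]
    congr 1
    push_cast
    ring
  rw [stirling_inv N hN, Efun, hcpow, hsum_eq]
  have hfact : ((N:ℕ).factorial : ℂ) ≠ 0 := by exact_mod_cast (N:ℕ).factorial_ne_zero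
  have e1 : (1 + (1+z)/(N:ℂ)) = ((N:ℂ)+1+z)/(N:ℂ) := by field_simp; try ring
  rw [e1, div_pow]
  push_cast
  rw [hsqrt]
  have hA : Complex.exp ((z+1/2) * ((harmonic N:ℚ):ℂ) - (N:ℂ))
      = Complex.exp ((z+1/2) * (((harmonic N:ℚ):ℂ) - (L:ℂ))) * Complex.exp ((z+1)*(L:ℂ))
        * Complex.exp (-(L:ℂ)/2) * Complex.exp (-(N:ℂ)) := by
    rw [← Complex.exp_add, ← Complex.exp_add, ← Complex.exp_add]
    congr 1
    ring
  rw [hA]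
  have hex := Complex.exp_ne_zero ((z+1)*(L:ℂ))
  field_simp
  ring

lemma tendsto_Efun (z : ℂ) : Tendsto (Efun z) atTop
    (𝓝 (Complex.exp (1+z) * Complex.exp ((z+1/2) * (Real.eulerMascheroniConstant:ℂ))
      * (((Real.sqrt 2 * Real.sqrt Real.pi)⁻¹ : ℝ):ℂ))) := by
  have hA := tendsto_one_add_div (1+z)
  have hB : Tendsto (fun N:ℕ => Complex.exp ((z+1/2) * (((harmonic N:ℝ) - Real.log N :ℝ):ℂ)))
      atTop (𝓝 (Complex.exp ((z+1/2)*(Real.eulerMascheroniConstant:ℂ)))) := by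
    have h0 := Real.tendsto_harmonic_sub_log
    have h1 : Tendsto (fun N:ℕ => (((harmonic N:ℝ) - Real.log N :ℝ):ℂ)) atTop
        (𝓝 ((Real.eulerMascheroniConstant:ℝ):ℂ)) :=
      (Complex.continuous_ofReal.tendsto _).comp h0
    exact (Complex.continuous_exp.tendsto _).comp (h1.const_mul _)
  have hC : Tendsto (fun N:ℕ => (((Real.sqrt 2 * Stirling.stirlingSeq N)⁻¹:ℝ):ℂ)) atTop
      (𝓝 (((Real.sqrt 2 * Real.sqrt Real.pi)⁻¹ : ℝ):ℂ)) := by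
    refine (Complex.continuous_ofReal.tendsto _).comp ?_
    refine Filter.Tendsto.inv₀ (tendsto_const_nhds.mul Stirling.tendsto_stirlingSeq_sqrt_pi) ?_
    positivity
  apply ((hA.mul hB).mul hC).congr'
  filter_upwards [eventually_ge_atTop 1] with N hN
  exact (Efun_decomp z N hN).symm

lemma ratio_eq (z : ℂ) (hw : ∀ n : ℕ, z + 1 + n ≠ 0) (hfz : ∀ n, fac n z ≠ 0)
    (N : ℕ) (hN : 1 ≤ N) :
    (∏ n ∈ Finset.range N, fac n (z+1)) / (∏ n ∈ Finset.range N, fac n z)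
      = Complex.GammaSeq (z+1) N * Efun z N := by
  have hB : (∏ n ∈ Finset.range N, fac n z) ≠ 0 := Finset.prod_ne_zero_iff.mpr fun n _ => hfz n
  have hQ : ∀ k ∈ Finset.range N, (z + 1 + (k:ℂ)) ≠ 0 := fun k _ => hw k
  have hQN : (∏ k ∈ Finset.range N, (z + 1 + (k:ℂ))) ≠ 0 := Finset.prod_ne_zero_iff.mpr hQ
  have hps := prod_shift z N
  have hNR : (0:ℝ) < (N:ℝ) := by exact_mod_cast hN
  have hNc : ((N:ℂ)) ≠ 0 := by exact_mod_cast hNR.ne'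
  have hcp : ((N:ℂ))^(z+(1:ℂ)) ≠ 0 := by
    rw [Complex.cpow_def_of_ne_zero hNc]
    exact Complex.exp_ne_zero _
  have hfact : ((N:ℕ).factorial : ℂ) ≠ 0 := by exact_mod_cast (N:ℕ).factorial_ne_zero
  have hzN : (z + 1 + (N:ℂ)) ≠ 0 := hw N
  have hGS : Complex.GammaSeq (z+1) N
      = (N:ℂ)^(z+(1:ℂ)) * (N:ℕ).factorial /
        ((∏ k ∈ Finset.range N, (z + 1 + (k:ℂ))) * (z + 1 + (N:ℂ))) := by
    rw [Complex.GammaSeq, Finset.prod_range_succ]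
  have hR1 : (∏ n ∈ Finset.range N, fac n (z+1)) / (∏ n ∈ Finset.range N, fac n z)
      = ((N:ℂ)+1+z)^N * Complex.exp ((z+1/2)*hsum N - N) /
        (∏ k ∈ Finset.range N, (z + 1 + (k:ℂ))) := by
    rw [div_eq_div_iff hB hQN]
    linear_combination hps
  rw [hR1, hGS, Efun, div_mul_div_comm]
  rw [div_eq_div_iff hQN (mul_ne_zero (mul_ne_zero hQN hzN) (mul_ne_zero hcp hfact))]
  ring

noncomputable def Sfun (z : ℂ) : ℂ := ∑' n, lterm n z

lemma barnesG_eq (z : ℂ) (hz : ∀ n : ℕ, 1 + z / ((n:ℂ)+1) ≠ 0) :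
    barnesG (1 + z) = pref z * Complex.exp (Sfun z) := by
  unfold barnesG pref Sfun
  simp only [add_sub_cancel_left]
  congr 1
  exact (hasProd_fac z hz).tprod_eq

lemma nonint_to_fac (z : ℂ) (h : ∀ n : ℕ, z + ((n:ℂ)+1) ≠ 0) :
    ∀ n : ℕ, 1 + z / ((n:ℂ)+1) ≠ 0 := by
  intro n hcon
  apply h n
  have h1 := ncast_ne n
  have : (1 + z/((n:ℂ)+1)) * ((n:ℂ)+1) = z + ((n:ℂ)+1) := by field_simp; ring
  rw [← this, hcon, zero_mul]

lemma barnesG_one_add_ne_zero (z : ℂ) (hz : ∀ n : ℕ, 1 + z / ((n:ℂ)+1) ≠ 0) :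
    barnesG (1 + z) ≠ 0 := by
  rw [barnesG_eq z hz]
  unfold pref
  apply mul_ne_zero (mul_ne_zero _ (Complex.exp_ne_zero _)) (Complex.exp_ne_zero _)
  rw [Complex.cpow_def_of_ne_zero (by simp [Real.pi_ne_zero])]
  exact Complex.exp_ne_zero _

lemma pref_ratio (z : ℂ) :
    pref (z+1) * (Complex.exp (1+z) * Complex.exp ((z+1/2) * (Real.eulerMascheroniConstant:ℂ))
      * (((Real.sqrt 2 * Real.sqrt Real.pi)⁻¹ : ℝ):ℂ)) = pref z := by
  unfold pref
  have h2pi : (2 * (Real.pi:ℂ)) ≠ 0 := by simp [Real.pi_ne_zero]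
  have hhalf : (2 * (Real.pi:ℂ)) ^ ((z+1)/2)
      = (2 * (Real.pi:ℂ)) ^ (z/2) * (2 * (Real.pi:ℂ)) ^ ((1:ℂ)/2) := by
    rw [← Complex.cpow_add _ _ h2pi]
    congr 1
    ring
  have hsq : (2 * (Real.pi:ℂ)) ^ ((1:ℂ)/2) = ((Real.sqrt 2 * Real.sqrt Real.pi : ℝ) : ℂ) := by
    have h0 : (0:ℝ) ≤ 2 * Real.pi := by positivity
    have h1 := Complex.ofReal_cpow h0 (1/2)
    rw [show ((2 * Real.pi : ℝ) : ℂ) = 2 * (Real.pi:ℂ) by push_cast; ring] at h1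
    rw [show ((1:ℂ)/2) = (((1/2:ℝ)):ℂ) by norm_num]
    rw [← h1, ← Real.sqrt_eq_rpow, Real.sqrt_mul (by norm_num)]
  rw [hhalf, hsq]
  have hexp : Complex.exp (-((z+1) + (z+1)^2*(1+(Real.eulerMascheroniConstant:ℂ)))/2)
      * (Complex.exp (1+z) * Complex.exp ((z+1/2) * (Real.eulerMascheroniConstant:ℂ)))
      = Complex.exp (-(z + z^2*(1+(Real.eulerMascheroniConstant:ℂ)))/2) := by
    rw [← Complex.exp_add, ← Complex.exp_add]
    congr 1
    ring
  have hnz : ((Real.sqrt 2 * Real.sqrt Real.pi : ℝ) : ℂ) ≠ 0 := by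
    have : (0:ℝ) < Real.sqrt 2 * Real.sqrt Real.pi := by positivity
    exact_mod_cast this.ne'
  have hcancel : ((Real.sqrt 2 * Real.sqrt Real.pi : ℝ):ℂ) * (((Real.sqrt 2 * Real.sqrt Real.pi)⁻¹:ℝ):ℂ) = 1 := by
    rw [Complex.ofReal_inv]
    exact mul_inv_cancel₀ hnz
  linear_combination ((2*(Real.pi:ℂ))^(z/2) * ((Real.sqrt 2 * Real.sqrt Real.pi : ℝ):ℂ)
      * (((Real.sqrt 2 * Real.sqrt Real.pi)⁻¹:ℝ):ℂ)) * hexp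
    + ((2*(Real.pi:ℂ))^(z/2)
      * Complex.exp (-(z + z^2*(1+(Real.eulerMascheroniConstant:ℂ)))/2)) * hcancel

lemma barnesG_add_one (w : ℂ) (hw : ∀ n : ℕ, w + (n:ℂ) ≠ 0) :
    barnesG (w + 1) = Complex.Gamma w * barnesG w := by
  set z := w - 1 with hzdef
  have hzw : z + 1 = w := by rw [hzdef]; ring
  have hz : ∀ n : ℕ, 1 + z / ((n:ℂ)+1) ≠ 0 := by
    apply nonint_to_fac
    intro n h
    exact hw n (by linear_combination h)
  have hz1 : ∀ n : ℕ, 1 + (z+1) / ((n:ℂ)+1) ≠ 0 := by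
    apply nonint_to_fac
    intro n h
    apply hw (n+1)
    push_cast
    linear_combination h
  have hfz : ∀ n, fac n z ≠ 0 := fun n =>
    mul_ne_zero (pow_ne_zero _ (hz n)) (Complex.exp_ne_zero _)
  have hw' : ∀ n : ℕ, z + 1 + (n:ℂ) ≠ 0 := by
    intro n h
    exact hw n (by linear_combination h)
  have h1 : Tendsto (fun N => ∏ n ∈ Finset.range N, fac n (z+1)) atTop
      (𝓝 (Complex.exp (Sfun (z+1)))) := (hasProd_fac (z+1) hz1).tendsto_prod_nat
  have h2 : Tendsto (fun N => ∏ n ∈ Finset.range N, fac n z) atTop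
      (𝓝 (Complex.exp (Sfun z))) := (hasProd_fac z hz).tendsto_prod_nat
  have hT : Tendsto (fun N => (∏ n ∈ Finset.range N, fac n (z+1)) /
      (∏ n ∈ Finset.range N, fac n z)) atTop
      (𝓝 (Complex.exp (Sfun (z+1)) / Complex.exp (Sfun z))) :=
    h1.div h2 (Complex.exp_ne_zero _)
  have hT2 : Tendsto (fun N => Complex.GammaSeq (z+1) N * Efun z N) atTop
      (𝓝 (Complex.Gamma (z+1) * (Complex.exp (1+z)
        * Complex.exp ((z+1/2) * (Real.eulerMascheroniConstant:ℂ))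
        * (((Real.sqrt 2 * Real.sqrt Real.pi)⁻¹ : ℝ):ℂ)))) :=
    (Complex.GammaSeq_tendsto_Gamma (z+1)).mul (tendsto_Efun z)
  have huniq : Complex.exp (Sfun (z+1)) / Complex.exp (Sfun z)
      = Complex.Gamma (z+1) * (Complex.exp (1+z)
        * Complex.exp ((z+1/2) * (Real.eulerMascheroniConstant:ℂ))
        * (((Real.sqrt 2 * Real.sqrt Real.pi)⁻¹ : ℝ):ℂ)) := by
    refine tendsto_nhds_unique (hT.congr' ?_) hT2
    filter_upwards [eventually_ge_atTop 1] with N hN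
    exact ratio_eq z hw' hfz N hN
  have hfin : Complex.exp (Sfun (z+1)) = Complex.Gamma (z+1) * (Complex.exp (1+z)
        * Complex.exp ((z+1/2) * (Real.eulerMascheroniConstant:ℂ))
        * (((Real.sqrt 2 * Real.sqrt Real.pi)⁻¹ : ℝ):ℂ)) * Complex.exp (Sfun z) := by
    rw [div_eq_iff (Complex.exp_ne_zero _)] at huniq
    linear_combination huniq
  have e1 : barnesG (w+1) = pref (z+1) * Complex.exp (Sfun (z+1)) := by
    rw [show w + 1 = 1 + (z+1) by rw [hzdef]; ring]
    exact barnesG_eq (z+1) hz1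
  have e0 : barnesG w = pref z * Complex.exp (Sfun z) := by
    rw [show w = 1 + z by rw [hzdef]; ring]
    exact barnesG_eq z hz
  rw [e1, e0, hfin, ← hzw]
  linear_combination Complex.Gamma (z+1) * Complex.exp (Sfun z) * pref_ratio z

lemma barnesG_ne_zero' (σ : ℂ) (hσ : ∀ n : ℤ, σ ≠ (n:ℂ)) : barnesG (1 + σ) ≠ 0 := by
  apply barnesG_one_add_ne_zero
  apply nonint_to_fac
  intro n h
  exact hσ (-(n+1)) (by push_cast; linear_combination h)

lemma sin_pi_mul_ne_zero' (σ : ℂ) (hσ : ∀ n : ℤ, σ ≠ (n:ℂ)) :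
    Complex.sin ((Real.pi:ℂ) * σ) ≠ 0 := by
  rw [Complex.sin_ne_zero_iff]
  intro k h
  apply hσ k
  have hpi : (Real.pi:ℂ) ≠ 0 := by exact_mod_cast Real.pi_ne_zero
  apply mul_left_cancel₀ hpi
  rw [h]
  ring

lemma shift_nonint (σ : ℂ) (hσ : ∀ n : ℤ, σ ≠ (n:ℂ)) (m : ℤ) :
    ∀ n : ℤ, σ + (m:ℂ) ≠ (n:ℂ) := by
  intro n h
  exact hσ (n - m) (by push_cast; linear_combination h)

lemma neg_nonint (σ : ℂ) (hσ : ∀ n : ℤ, σ ≠ (n:ℂ)) :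
    ∀ n : ℤ, -σ ≠ (n:ℂ) := by
  intro n h
  exact hσ (-n) (by push_cast; linear_combination -h)

lemma GHat_ne_zero (σ : ℂ) (hσ : ∀ n : ℤ, σ ≠ (n:ℂ)) : GHat σ ≠ 0 := by
  unfold GHat
  apply div_ne_zero (barnesG_ne_zero' σ hσ)
  rw [show (1:ℂ) - σ = 1 + (-σ) by ring]
  exact barnesG_ne_zero' (-σ) (neg_nonint σ hσ)

lemma GHat_succ (σ : ℂ) (hσ : ∀ n : ℤ, σ ≠ (n:ℂ)) :
    GHat (σ + 1) * Complex.sin ((Real.pi:ℂ) * σ) = -(Real.pi:ℂ) * GHat σ := by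
  have hA : barnesG ((1+σ) + 1) = Complex.Gamma (1+σ) * barnesG (1+σ) := by
    apply barnesG_add_one
    intro n h
    exact hσ (-(n+1)) (by push_cast; linear_combination h)
  have hB : barnesG ((-σ) + 1) = Complex.Gamma (-σ) * barnesG (-σ) := by
    apply barnesG_add_one
    intro n h
    exact hσ n (by push_cast; linear_combination -h)
  have hBnz : barnesG (-σ) ≠ 0 := by
    rw [show -σ = 1 + (-σ - 1) by ring]
    refine barnesG_ne_zero' _ ?_
    intro n h
    exact hσ (-(n+1)) (by push_cast; linear_combination -h)
  have hGnz : Complex.Gamma (-σ) ≠ 0 := by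
    apply Complex.Gamma_ne_zero
    intro m h
    exact hσ m (by push_cast; linear_combination -h)
  have hrefl : Complex.Gamma (1+σ) * Complex.Gamma (-σ) * Complex.sin ((Real.pi:ℂ)*σ)
      = -(Real.pi:ℂ) := by
    have h0 := Complex.Gamma_mul_Gamma_one_sub (1+σ)
    rw [show (1:ℂ) - (1+σ) = -σ by ring] at h0
    have hsin : Complex.sin ((Real.pi:ℂ) * (1+σ)) = -Complex.sin ((Real.pi:ℂ)*σ) := by
      rw [show (Real.pi:ℂ)*(1+σ) = (Real.pi:ℂ)*σ + (Real.pi:ℂ) by ring, Complex.sin_add]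
      rw [show Complex.sin (Real.pi:ℂ) = 0 by rw [← Complex.ofReal_sin]; simp,
        show Complex.cos (Real.pi:ℂ) = -1 by rw [← Complex.ofReal_cos]; simp]
      ring
    rw [hsin] at h0
    have hsnz : Complex.sin ((Real.pi:ℂ)*σ) ≠ 0 := sin_pi_mul_ne_zero' σ hσ
    rw [eq_div_iff (neg_ne_zero.mpr hsnz)] at h0
    linear_combination -h0
  unfold GHat
  rw [show (1:ℂ) + (σ+1) = (1+σ)+1 by ring, show (1:ℂ) - (σ+1) = -σ by ring, hA,
    show (1:ℂ) - σ = (-σ) + 1 by ring, hB]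
  rw [div_mul_eq_mul_div, ← mul_div_assoc,
    div_eq_div_iff hBnz (mul_ne_zero hGnz hBnz)]
  linear_combination (barnesG (1+σ) * barnesG (-σ)) * hrefl

lemma GHat_pred (σ : ℂ) (hσ : ∀ n : ℤ, σ ≠ (n:ℂ)) :
    GHat (σ - 1) * (Real.pi:ℂ) = GHat σ * Complex.sin ((Real.pi:ℂ) * σ) := by
  have h1 : ∀ n : ℤ, σ - 1 ≠ (n:ℂ) := by
    intro n h
    exact hσ (n+1) (by push_cast; linear_combination h)
  have h2 := GHat_succ (σ-1) h1
  rw [sub_add_cancel] at h2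
  have hsin : Complex.sin ((Real.pi:ℂ) * (σ-1)) = -Complex.sin ((Real.pi:ℂ)*σ) := by
    rw [show (Real.pi:ℂ)*(σ-1) = (Real.pi:ℂ)*σ - (Real.pi:ℂ) by ring, Complex.sin_sub]
    rw [show Complex.sin (Real.pi:ℂ) = 0 by rw [← Complex.ofReal_sin]; simp,
      show Complex.cos (Real.pi:ℂ) = -1 by rw [← Complex.ofReal_cos]; simp]
    ring
  rw [hsin] at h2
  linear_combination h2

lemma key_s14 (a x : ℂ) (h1 : ∀ n : ℤ, a + x ≠ (n:ℂ)) (h2 : ∀ n : ℤ, a - x ≠ (n:ℂ)) :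
    GHat (a + x + 1) * GHat (a - x - 1) * Complex.sin ((Real.pi:ℂ) * (a + x))
      = -(GHat (a + x) * GHat (a - x) * Complex.sin ((Real.pi:ℂ) * (a - x))) := by
  have hs := GHat_succ (a+x) h1
  have hp := GHat_pred (a-x) h2
  have hpi : (Real.pi:ℂ) ≠ 0 := by exact_mod_cast Real.pi_ne_zero
  apply mul_right_cancel₀ hpi
  calc GHat (a+x+1) * GHat (a-x-1) * Complex.sin ((Real.pi:ℂ)*(a+x)) * (Real.pi:ℂ)
      = (GHat (a+x+1) * Complex.sin ((Real.pi:ℂ)*(a+x))) * (GHat (a-x-1) * (Real.pi:ℂ)) := by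
        ring
    _ = (-(Real.pi:ℂ) * GHat (a+x)) * (GHat (a-x) * Complex.sin ((Real.pi:ℂ)*(a-x))) := by
        rw [hs, hp]
    _ = -(GHat (a+x) * GHat (a-x) * Complex.sin ((Real.pi:ℂ)*(a-x))) * (Real.pi:ℂ) := by
        ring

lemma key2 (p q x : ℂ)
    (hpp : ∀ n : ℤ, p + q + x ≠ (n:ℂ)) (hpm : ∀ n : ℤ, p + q - x ≠ (n:ℂ))
    (hmp : ∀ n : ℤ, p - q + x ≠ (n:ℂ)) (hmm : ∀ n : ℤ, p - q - x ≠ (n:ℂ)) :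
    (GHat (p + q + (x+1)) * GHat (p + q - (x+1)) * (GHat (p - q + (x+1)) * GHat (p - q - (x+1))))
      * (Complex.sin ((Real.pi:ℂ) * (p + x + q)) * Complex.sin ((Real.pi:ℂ) * (p + x - q)))
    = (GHat (p + q + x) * GHat (p + q - x) * (GHat (p - q + x) * GHat (p - q - x)))
      * (Complex.sin ((Real.pi:ℂ) * (p - x + q)) * Complex.sin ((Real.pi:ℂ) * (p - x - q))) := by
  have k1 := key_s14 (p+q) x hpp hpm
  have k2 := key_s14 (p-q) x hmp hmm
  rw [show p + q + (x+1) = p + q + x + 1 by ring, show p + q - (x+1) = p + q - x - 1 by ring,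
    show p - q + (x+1) = p - q + x + 1 by ring, show p - q - (x+1) = p - q - x - 1 by ring,
    show (Real.pi:ℂ) * (p + x + q) = (Real.pi:ℂ) * (p + q + x) by ring,
    show (Real.pi:ℂ) * (p + x - q) = (Real.pi:ℂ) * (p - q + x) by ring,
    show (Real.pi:ℂ) * (p - x + q) = (Real.pi:ℂ) * (p + q - x) by ring,
    show (Real.pi:ℂ) * (p - x - q) = (Real.pi:ℂ) * (p - q - x) by ring]
  linear_combination (GHat (p-q+x+1) * GHat (p-q-x-1) * Complex.sin ((Real.pi:ℂ)*(p-q+x))) * k1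
    + (GHat (p+q+x) * GHat (p+q-x) * Complex.sin ((Real.pi:ℂ)*(p+q-x))) * (-k2)

end BarnesAux


/-- existence part of the Lemma on the symmetrized connection coefficient:
the explicit ratio `κ` of products of `Ĝ`-values satisfies the two recurrence relations
(3.8)–(3.9). -/
theorem kappa_satisfies_recurrences
    (θ0 θt θ1 θinf σ0t σ1t : ℂ)
    (hint : ∀ e e' : ℤ, (e = 1 ∨ e = -1) → (e' = 1 ∨ e' = -1) → ∀ n : ℤ,
      θt + (e : ℂ) * θ0 + (e' : ℂ) * σ0t ≠ (n : ℂ) ∧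
      θ1 + (e : ℂ) * θinf + (e' : ℂ) * σ0t ≠ (n : ℂ) ∧
      θt + (e : ℂ) * θ1 + (e' : ℂ) * σ1t ≠ (n : ℂ) ∧
      θ0 + (e : ℂ) * θinf + (e' : ℂ) * σ1t ≠ (n : ℂ))
    (κ : ℂ → ℂ → ℂ)
    (hκ : ∀ x y : ℂ, κ x y =
      (GHat (θt + θ0 + x) * GHat (θ1 + θinf + x) *
       GHat (θt + θ0 - x) * GHat (θ1 + θinf - x) *
       GHat (θt - θ0 + x) * GHat (θ1 - θinf + x) *
       GHat (θt - θ0 - x) * GHat (θ1 - θinf - x)) /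
      (GHat (θt + θ1 + y) * GHat (θ0 + θinf + y) *
       GHat (θt + θ1 - y) * GHat (θ0 + θinf - y) *
       GHat (θt - θ1 + y) * GHat (θ0 - θinf + y) *
       GHat (θt - θ1 - y) * GHat (θ0 - θinf - y))) :
    κ (σ0t + 1) σ1t *
      (Complex.sin ((π : ℂ) * (θt + σ0t + θ0)) * Complex.sin ((π : ℂ) * (θ1 + σ0t + θinf)) *
       Complex.sin ((π : ℂ) * (θt + σ0t - θ0)) * Complex.sin ((π : ℂ) * (θ1 + σ0t - θinf))) =
    κ σ0t σ1t *
      (Complex.sin ((π : ℂ) * (θt - σ0t + θ0)) * Complex.sin ((π : ℂ) * (θ1 - σ0t + θinf)) *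
       Complex.sin ((π : ℂ) * (θt - σ0t - θ0)) * Complex.sin ((π : ℂ) * (θ1 - σ0t - θinf))) ∧
    κ σ0t (σ1t + 1) *
      (Complex.sin ((π : ℂ) * (θt - σ1t + θ1)) * Complex.sin ((π : ℂ) * (θ0 - σ1t + θinf)) *
       Complex.sin ((π : ℂ) * (θt - σ1t - θ1)) * Complex.sin ((π : ℂ) * (θ0 - σ1t - θinf))) =
    κ σ0t σ1t *
      (Complex.sin ((π : ℂ) * (θt + σ1t + θ1)) * Complex.sin ((π : ℂ) * (θ0 + σ1t + θinf)) *
       Complex.sin ((π : ℂ) * (θt + σ1t - θ1)) * Complex.sin ((π : ℂ) * (θ0 + σ1t - θinf))) := by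
  have c1pp : ∀ n:ℤ, θt + θ0 + σ0t ≠ (n:ℂ) :=
    fun n h => (hint 1 1 (Or.inl rfl) (Or.inl rfl) n).1 (by push_cast; linear_combination h)
  have c1pm : ∀ n:ℤ, θt + θ0 - σ0t ≠ (n:ℂ) :=
    fun n h => (hint 1 (-1) (Or.inl rfl) (Or.inr rfl) n).1 (by push_cast; linear_combination h)
  have c1mp : ∀ n:ℤ, θt - θ0 + σ0t ≠ (n:ℂ) :=
    fun n h => (hint (-1) 1 (Or.inr rfl) (Or.inl rfl) n).1 (by push_cast; linear_combination h)
  have c1mm : ∀ n:ℤ, θt - θ0 - σ0t ≠ (n:ℂ) :=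
    fun n h => (hint (-1) (-1) (Or.inr rfl) (Or.inr rfl) n).1 (by push_cast; linear_combination h)
  have c2pp : ∀ n:ℤ, θ1 + θinf + σ0t ≠ (n:ℂ) :=
    fun n h => (hint 1 1 (Or.inl rfl) (Or.inl rfl) n).2.1 (by push_cast; linear_combination h)
  have c2pm : ∀ n:ℤ, θ1 + θinf - σ0t ≠ (n:ℂ) :=
    fun n h => (hint 1 (-1) (Or.inl rfl) (Or.inr rfl) n).2.1 (by push_cast; linear_combination h)
  have c2mp : ∀ n:ℤ, θ1 - θinf + σ0t ≠ (n:ℂ) :=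
    fun n h => (hint (-1) 1 (Or.inr rfl) (Or.inl rfl) n).2.1 (by push_cast; linear_combination h)
  have c2mm : ∀ n:ℤ, θ1 - θinf - σ0t ≠ (n:ℂ) :=
    fun n h => (hint (-1) (-1) (Or.inr rfl) (Or.inr rfl) n).2.1 (by push_cast; linear_combination h)
  have c3pp : ∀ n:ℤ, θt + θ1 + σ1t ≠ (n:ℂ) :=
    fun n h => (hint 1 1 (Or.inl rfl) (Or.inl rfl) n).2.2.1 (by push_cast; linear_combination h)
  have c3pm : ∀ n:ℤ, θt + θ1 - σ1t ≠ (n:ℂ) :=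
    fun n h => (hint 1 (-1) (Or.inl rfl) (Or.inr rfl) n).2.2.1 (by push_cast; linear_combination h)
  have c3mp : ∀ n:ℤ, θt - θ1 + σ1t ≠ (n:ℂ) :=
    fun n h => (hint (-1) 1 (Or.inr rfl) (Or.inl rfl) n).2.2.1 (by push_cast; linear_combination h)
  have c3mm : ∀ n:ℤ, θt - θ1 - σ1t ≠ (n:ℂ) :=
    fun n h => (hint (-1) (-1) (Or.inr rfl) (Or.inr rfl) n).2.2.1 (by push_cast; linear_combination h)
  have c4pp : ∀ n:ℤ, θ0 + θinf + σ1t ≠ (n:ℂ) :=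
    fun n h => (hint 1 1 (Or.inl rfl) (Or.inl rfl) n).2.2.2 (by push_cast; linear_combination h)
  have c4pm : ∀ n:ℤ, θ0 + θinf - σ1t ≠ (n:ℂ) :=
    fun n h => (hint 1 (-1) (Or.inl rfl) (Or.inr rfl) n).2.2.2 (by push_cast; linear_combination h)
  have c4mp : ∀ n:ℤ, θ0 - θinf + σ1t ≠ (n:ℂ) :=
    fun n h => (hint (-1) 1 (Or.inr rfl) (Or.inl rfl) n).2.2.2 (by push_cast; linear_combination h)
  have c4mm : ∀ n:ℤ, θ0 - θinf - σ1t ≠ (n:ℂ) :=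
    fun n h => (hint (-1) (-1) (Or.inr rfl) (Or.inr rfl) n).2.2.2 (by push_cast; linear_combination h)
  have K1 := key2 θt θ0 σ0t c1pp c1pm c1mp c1mm
  have K2 := key2 θ1 θinf σ0t c2pp c2pm c2mp c2mm
  have K3 := key2 θt θ1 σ1t c3pp c3pm c3mp c3mm
  have K4 := key2 θ0 θinf σ1t c4pp c4pm c4mp c4mm
  have d1 : ∀ n:ℤ, θt + θ1 + (σ1t+1) ≠ (n:ℂ) :=
    fun n h => c3pp (n-1) (by push_cast; linear_combination h)
  have d2 : ∀ n:ℤ, θ0 + θinf + (σ1t+1) ≠ (n:ℂ) :=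
    fun n h => c4pp (n-1) (by push_cast; linear_combination h)
  have d3 : ∀ n:ℤ, θt + θ1 - (σ1t+1) ≠ (n:ℂ) :=
    fun n h => c3pm (n+1) (by push_cast; linear_combination h)
  have d4 : ∀ n:ℤ, θ0 + θinf - (σ1t+1) ≠ (n:ℂ) :=
    fun n h => c4pm (n+1) (by push_cast; linear_combination h)
  have d5 : ∀ n:ℤ, θt - θ1 + (σ1t+1) ≠ (n:ℂ) :=
    fun n h => c3mp (n-1) (by push_cast; linear_combination h)
  have d6 : ∀ n:ℤ, θ0 - θinf + (σ1t+1) ≠ (n:ℂ) :=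
    fun n h => c4mp (n-1) (by push_cast; linear_combination h)
  have d7 : ∀ n:ℤ, θt - θ1 - (σ1t+1) ≠ (n:ℂ) :=
    fun n h => c3mm (n+1) (by push_cast; linear_combination h)
  have d8 : ∀ n:ℤ, θ0 - θinf - (σ1t+1) ≠ (n:ℂ) :=
    fun n h => c4mm (n+1) (by push_cast; linear_combination h)
  have hD0 : (GHat (θt + θ1 + σ1t) * GHat (θ0 + θinf + σ1t) *
       GHat (θt + θ1 - σ1t) * GHat (θ0 + θinf - σ1t) *
       GHat (θt - θ1 + σ1t) * GHat (θ0 - θinf + σ1t) *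
       GHat (θt - θ1 - σ1t) * GHat (θ0 - θinf - σ1t)) ≠ 0 :=
    mul_ne_zero (mul_ne_zero (mul_ne_zero (mul_ne_zero (mul_ne_zero (mul_ne_zero
      (mul_ne_zero (GHat_ne_zero _ c3pp) (GHat_ne_zero _ c4pp)) (GHat_ne_zero _ c3pm))
      (GHat_ne_zero _ c4pm)) (GHat_ne_zero _ c3mp)) (GHat_ne_zero _ c4mp))
      (GHat_ne_zero _ c3mm)) (GHat_ne_zero _ c4mm)
  have hD1 : (GHat (θt + θ1 + (σ1t+1)) * GHat (θ0 + θinf + (σ1t+1)) *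
       GHat (θt + θ1 - (σ1t+1)) * GHat (θ0 + θinf - (σ1t+1)) *
       GHat (θt - θ1 + (σ1t+1)) * GHat (θ0 - θinf + (σ1t+1)) *
       GHat (θt - θ1 - (σ1t+1)) * GHat (θ0 - θinf - (σ1t+1))) ≠ 0 :=
    mul_ne_zero (mul_ne_zero (mul_ne_zero (mul_ne_zero (mul_ne_zero (mul_ne_zero
      (mul_ne_zero (GHat_ne_zero _ d1) (GHat_ne_zero _ d2)) (GHat_ne_zero _ d3))
      (GHat_ne_zero _ d4)) (GHat_ne_zero _ d5)) (GHat_ne_zero _ d6))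
      (GHat_ne_zero _ d7)) (GHat_ne_zero _ d8)
  constructor
  · rw [hκ, hκ, div_mul_eq_mul_div, div_mul_eq_mul_div, div_eq_div_iff hD0 hD0]
    have K12 := congrArg₂ (· * ·) K1 K2
    linear_combination (GHat (θt + θ1 + σ1t) * GHat (θ0 + θinf + σ1t) *
       GHat (θt + θ1 - σ1t) * GHat (θ0 + θinf - σ1t) *
       GHat (θt - θ1 + σ1t) * GHat (θ0 - θinf + σ1t) *
       GHat (θt - θ1 - σ1t) * GHat (θ0 - θinf - σ1t)) * K12
  · rw [hκ, hκ, div_mul_eq_mul_div, div_mul_eq_mul_div, div_eq_div_iff hD1 hD0]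
    have K34 := congrArg₂ (· * ·) K3 K4
    linear_combination (-(GHat (θt + θ0 + σ0t) * GHat (θ1 + θinf + σ0t) *
       GHat (θt + θ0 - σ0t) * GHat (θ1 + θinf - σ0t) *
       GHat (θt - θ0 + σ0t) * GHat (θ1 - θinf + σ0t) *
       GHat (θt - θ0 - σ0t) * GHat (θ1 - θinf - σ0t))) * K34
end

section
/- For every real t with 0 ≤ t < 1, the complete elliptic integral of the first kind has the Gauss hypergeometric expansion ∫_{0}^{1} dx/√((1−x²)(1−t·x²)) = (π/2)·Σ_{n=0}^{∞} ((1/2)_n / n!)²·tⁿ, where (1/2)_n = ∏_{k=0}^{n−1} (1/2 + k) is the Pochhammer symbol; in particular the improper integral on the left converges. -/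
open Real MeasureTheory Finset

noncomputable def ellc (n : ℕ) : ℝ := ∏ k ∈ Finset.range n, (2*(k:ℝ)+1)/(2*k+2)

lemma ellc_zero : ellc 0 = 1 := by simp [ellc]

lemma ellc_nonneg (n : ℕ) : 0 ≤ ellc n :=
  Finset.prod_nonneg fun k _ => by positivity

lemma ellc_le_one (n : ℕ) : ellc n ≤ 1 :=
  Finset.prod_le_one (fun k _ => by positivity)
    (fun k _ => by rw [div_le_one (by positivity)]; linarith)

lemma ellc_rec (n : ℕ) : (2*(n:ℝ)+2) * ellc (n+1) = (2*n+1) * ellc n := by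
  rw [ellc, Finset.prod_range_succ,
    show (∏ k ∈ Finset.range n, (2*(k:ℝ)+1)/(2*k+2)) = ellc n from rfl]
  field_simp

lemma ellc_eq (n : ℕ) : (∏ k ∈ Finset.range n, ((1:ℝ)/2 + k)) / (n.factorial : ℝ) = ellc n := by
  rw [ellc, ← Finset.prod_range_add_one_eq_factorial n]
  push_cast
  rw [← Finset.prod_div_distrib]
  apply Finset.prod_congr rfl
  intro k _
  have h1 : (k:ℝ) + 1 ≠ 0 := by positivity
  have h2 : 2*(k:ℝ) + 2 ≠ 0 := by positivity
  field_simp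
  ring

lemma ellT_eq (n : ℕ) :
    2 * ∑ k ∈ range (n+1), (k:ℝ) * (ellc k * ellc (n-k)) =
      n * ∑ k ∈ range (n+1), ellc k * ellc (n-k) := by
  have hrefl : ∑ k ∈ range (n+1), (k:ℝ) * (ellc k * ellc (n-k)) =
      ∑ k ∈ range (n+1), ((n:ℝ) - k) * (ellc k * ellc (n-k)) := by
    rw [← Finset.sum_range_reflect (fun k => (k:ℝ) * (ellc k * ellc (n-k))) (n+1)]
    apply Finset.sum_congr rfl
    intro k hk
    rw [Finset.mem_range] at hk
    have hk' : k ≤ n := Nat.lt_succ_iff.mp hk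
    have h1 : n + 1 - 1 - k = n - k := by omega
    have h2 : n - (n - k) = k := by omega
    rw [h1, h2, Nat.cast_sub hk']
    ring
  calc 2 * ∑ k ∈ range (n+1), (k:ℝ) * (ellc k * ellc (n-k))
      = (∑ k ∈ range (n+1), (k:ℝ) * (ellc k * ellc (n-k)))
        + ∑ k ∈ range (n+1), ((n:ℝ) - k) * (ellc k * ellc (n-k)) := by
        rw [← hrefl]; ring
    _ = ∑ k ∈ range (n+1), (n:ℝ) * (ellc k * ellc (n-k)) := by
        rw [← Finset.sum_add_distrib]; apply Finset.sum_congr rfl; intros; ring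
    _ = n * ∑ k ∈ range (n+1), ellc k * ellc (n-k) := by rw [Finset.mul_sum]

lemma ellconv (n : ℕ) : ∑ k ∈ range (n+1), ellc k * ellc (n-k) = 1 := by
  induction n with
  | zero => simp [ellc_zero]
  | succ n ih =>
    have hT : ∑ k ∈ range (n+2), (k:ℝ) * (ellc k * ellc (n+1-k)) =
        (∑ k ∈ range (n+1), (k:ℝ) * (ellc k * ellc (n-k)))
          + (1/2) * ∑ k ∈ range (n+1), ellc k * ellc (n-k) := by
      rw [Finset.sum_range_succ' (fun k => (k:ℝ) * (ellc k * ellc (n+1-k))) (n+1)]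
      simp only [Nat.cast_zero, zero_mul, add_zero, Nat.cast_add, Nat.cast_one]
      rw [Finset.mul_sum, ← Finset.sum_add_distrib]
      apply Finset.sum_congr rfl
      intro k hk
      have h1 : n + 1 - (k + 1) = n - k := by omega
      rw [h1]
      have hrec := ellc_rec k
      have h2 : ((k:ℝ)+1) * ellc (k+1) = ((k:ℝ) + 1/2) * ellc k := by nlinarith [hrec]
      calc ((k:ℝ)+1) * (ellc (k+1) * ellc (n-k))
          = (((k:ℝ)+1) * ellc (k+1)) * ellc (n-k) := by ring
        _ = (((k:ℝ) + 1/2) * ellc k) * ellc (n-k) := by rw [h2]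
        _ = (k:ℝ) * (ellc k * ellc (n-k)) + 1/2 * (ellc k * ellc (n-k)) := by ring
    have hTn := ellT_eq n
    have hTn1 := ellT_eq (n+1)
    rw [ih] at hTn
    rw [ih, mul_one] at hT
    have hkey : ((n:ℝ)+1) * ∑ k ∈ range (n+1+1), ellc k * ellc (n+1-k) = (n:ℝ)+1 := by
      push_cast at hTn1 ⊢
      rw [← hTn1, hT]
      linarith
    have hpos : ((n:ℝ)+1) ≠ 0 := by positivity
    field_simp at hkey
    exact hkey

lemma ellsummable {u : ℝ} (hu0 : 0 ≤ u) (hu1 : u < 1) :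
    Summable (fun n => ellc n * u ^ n) := by
  apply Summable.of_nonneg_of_le (fun n => mul_nonneg (ellc_nonneg n) (pow_nonneg hu0 n))
    (fun n => by
      calc ellc n * u ^ n ≤ 1 * u ^ n :=
            mul_le_mul_of_nonneg_right (ellc_le_one n) (by positivity)
        _ = u ^ n := one_mul _)
    (summable_geometric_of_lt_one hu0 hu1)

lemma ellbinom {u : ℝ} (hu0 : 0 ≤ u) (hu1 : u < 1) :
    ∑' n, ellc n * u ^ n = 1 / Real.sqrt (1 - u) := by
  set g := ∑' n, ellc n * u ^ n with hg
  have hsum := ellsummable hu0 hu1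
  have hnorm : Summable (fun n => ‖ellc n * u ^ n‖) := by
    have : (fun n => ‖ellc n * u ^ n‖) = fun n => ellc n * u ^ n :=
      funext fun n => Real.norm_of_nonneg (mul_nonneg (ellc_nonneg n) (pow_nonneg hu0 n))
    rw [this]; exact hsum
  have hsq : g * g = (1 - u)⁻¹ := by
    rw [hg, tsum_mul_tsum_eq_tsum_sum_range_of_summable_norm hnorm hnorm]
    have key : ∀ n, (∑ k ∈ range (n+1), (ellc k * u ^ k) * (ellc (n-k) * u ^ (n-k))) = u ^ n := by
      intro n
      have h1 : ∀ k ∈ range (n+1),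
          (ellc k * u ^ k) * (ellc (n-k) * u ^ (n-k)) = (ellc k * ellc (n-k)) * u ^ n := by
        intro k hk
        rw [Finset.mem_range] at hk
        have h2 : u ^ k * u ^ (n-k) = u ^ n := by
          rw [← pow_add]; congr 1; omega
        calc (ellc k * u ^ k) * (ellc (n-k) * u ^ (n-k))
            = (ellc k * ellc (n-k)) * (u^k * u^(n-k)) := by ring
          _ = (ellc k * ellc (n-k)) * u ^ n := by rw [h2]
      rw [Finset.sum_congr rfl h1, ← Finset.sum_mul, ellconv, one_mul]
    simp_rw [key]
    exact tsum_geometric_of_lt_one hu0 hu1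
  have h1u : (0:ℝ) < 1 - u := by linarith
  have hg1 : 1 ≤ g := by
    have := Summable.le_tsum hsum 0 (fun n _ => mul_nonneg (ellc_nonneg n) (pow_nonneg hu0 n))
    simpa [ellc_zero] using this
  have hgpos : 0 < g := lt_of_lt_of_le one_pos hg1
  have hs : 0 < Real.sqrt (1 - u) := Real.sqrt_pos.mpr h1u
  have key : (g * Real.sqrt (1 - u)) * (g * Real.sqrt (1 - u)) = 1 := by
    have h2 : Real.sqrt (1-u) * Real.sqrt (1-u) = 1 - u := Real.mul_self_sqrt h1u.le
    calc (g * Real.sqrt (1-u)) * (g * Real.sqrt (1-u))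
        = (g*g) * (Real.sqrt (1-u) * Real.sqrt (1-u)) := by ring
      _ = (1-u)⁻¹ * (1-u) := by rw [hsq, h2]
      _ = 1 := inv_mul_cancel₀ h1u.ne'
  have hone : g * Real.sqrt (1 - u) = 1 := by
    rcases mul_self_eq_one_iff.mp key with h | h
    · exact h
    · nlinarith [mul_pos hgpos hs]
  field_simp at hone ⊢
  linarith [hone]

lemma sin_pow_half (n : ℕ) : ∫ x in (0:ℝ)..(π/2), Real.sin x ^ (2*n) = π/2 * ellc n := by
  have hsymm : ∫ x in (π/2)..π, Real.sin x ^ (2*n) = ∫ x in (0:ℝ)..(π/2), Real.sin x ^ (2*n) := by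
    have := intervalIntegral.integral_comp_sub_left (a := 0) (b := π/2)
      (fun x => Real.sin x ^ (2*n)) π
    simp only [Real.sin_pi_sub] at this
    rw [this, show π - π/2 = π/2 by ring, sub_zero]
  have hadd : (∫ x in (0:ℝ)..(π/2), Real.sin x ^ (2*n)) + ∫ x in (π/2)..π, Real.sin x ^ (2*n)
      = ∫ x in (0:ℝ)..π, Real.sin x ^ (2*n) := by
    apply intervalIntegral.integral_add_adjacent_intervals <;>
      exact (Real.continuous_sin.pow _).intervalIntegrable _ _
  have heven := integral_sin_pow_even (n := n)
  have h2 : 2 * ∫ x in (0:ℝ)..(π/2), Real.sin x ^ (2*n) = π * ellc n := by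
    rw [two_mul]
    nth_rewrite 2 [← hsymm]
    rw [hadd, heven]
    rfl
  linarith

lemma sin_image_Ioo : Real.sin '' Set.Ioo 0 (π/2) = Set.Ioo 0 1 := by
  ext y
  constructor
  · rintro ⟨x, ⟨hx0, hx1⟩, rfl⟩
    constructor
    · exact Real.sin_pos_of_pos_of_lt_pi hx0 (hx1.trans (by linarith [Real.pi_pos]))
    · have := Real.strictMonoOn_sin (a := x) (b := π/2)
        ⟨by linarith, hx1.le⟩ ⟨by linarith [Real.pi_pos], le_refl _⟩ hx1
      simpa using this
  · rintro ⟨hy0, hy1⟩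
    refine ⟨Real.arcsin y, ⟨Real.arcsin_pos.mpr hy0, Real.arcsin_lt_pi_div_two.mpr hy1⟩,
      Real.sin_arcsin (by linarith) hy1.le⟩

lemma sin_injOn_Ioo : Set.InjOn Real.sin (Set.Ioo 0 (π/2)) :=
  Real.injOn_sin.mono (fun x hx => Set.mem_Icc.mpr
    ⟨by have := Set.mem_Ioo.mp hx; linarith [Real.pi_pos, this.1],
     by have := Set.mem_Ioo.mp hx; linarith [this.2]⟩)

/-- hypergeometric expansion of the complete elliptic integral of the
first kind, `K(t) = (π/2)·₂F₁(1/2,1/2;1;t)` for `0 ≤ t < 1`; in particular the improper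
integral converges. -/
theorem elliptic_integral_hypergeometric (t : ℝ) (ht0 : 0 ≤ t) (ht1 : t < 1) :
    IntegrableOn (fun x : ℝ => 1 / Real.sqrt ((1 - x ^ 2) * (1 - t * x ^ 2)))
      (Set.Ioo 0 1) ∧
    ∫ x in Set.Ioo (0 : ℝ) 1, 1 / Real.sqrt ((1 - x ^ 2) * (1 - t * x ^ 2)) =
      (π / 2) * ∑' n : ℕ,
        ((∏ k ∈ Finset.range n, ((1 : ℝ) / 2 + (k : ℝ))) / (n.factorial : ℝ)) ^ 2 * t ^ n := by
  set s : Set ℝ := Set.Ioo 0 (π/2) with hsdef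
  have hmeas : MeasurableSet s := measurableSet_Ioo
  have hderiv : ∀ x ∈ s, HasDerivWithinAt Real.sin (Real.cos x) s x :=
    fun x _ => (Real.hasDerivAt_sin x).hasDerivWithinAt
  have hinj : Set.InjOn Real.sin s := sin_injOn_Ioo
  set g : ℝ → ℝ := fun x => 1 / Real.sqrt ((1 - x ^ 2) * (1 - t * x ^ 2)) with hgdef
  have hden : ∀ θ : ℝ, 0 < 1 - t * Real.sin θ ^ 2 := by
    intro θ
    nlinarith [Real.sin_sq_le_one θ, sq_nonneg (Real.sin θ)]
  set h : ℝ → ℝ := fun θ => 1 / Real.sqrt (1 - t * Real.sin θ ^ 2) with hhdef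
  have hconth : Continuous h := by
    apply continuous_const.div
    · exact Real.continuous_sqrt.comp (by continuity)
    · intro θ; exact (Real.sqrt_pos.mpr (hden θ)).ne'
  have heqon : Set.EqOn (fun x => |Real.cos x| • g (Real.sin x)) h s := by
    intro θ hθ
    obtain ⟨h1, h2⟩ := Set.mem_Ioo.mp hθ
    have hcos : 0 < Real.cos θ :=
      Real.cos_pos_of_mem_Ioo ⟨by linarith [Real.pi_pos], h2⟩
    have hsin : 1 - Real.sin θ ^ 2 = Real.cos θ ^ 2 := (Real.cos_sq' θ).symm
    have hsq : Real.sqrt (1 - t * Real.sin θ ^ 2) ≠ 0 := (Real.sqrt_pos.mpr (hden θ)).ne'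
    simp only [smul_eq_mul, hgdef, hhdef]
    rw [hsin, Real.sqrt_mul (sq_nonneg _), Real.sqrt_sq hcos.le, abs_of_pos hcos]
    field_simp
  have hinth : IntegrableOn h s :=
    (hconth.integrableOn_Icc).mono_set Set.Ioo_subset_Icc_self
  have hpart1 : IntegrableOn g (Set.Ioo (0:ℝ) 1) := by
    rw [← sin_image_Ioo,
      integrableOn_image_iff_integrableOn_abs_deriv_smul hmeas hderiv hinj]
    exact hinth.congr_fun heqon.symm hmeas
  refine ⟨hpart1, ?_⟩
  have hchg : ∫ x in Set.Ioo (0:ℝ) 1, g x = ∫ θ in s, h θ := by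
    rw [← sin_image_Ioo, integral_image_eq_integral_abs_deriv_smul hmeas hderiv hinj]
    exact setIntegral_congr_fun hmeas heqon
  set F : ℕ → ℝ → ℝ := fun n θ => ellc n * t ^ n * Real.sin θ ^ (2*n) with hFdef
  have hFnn : ∀ n θ, 0 ≤ F n θ := fun n θ =>
    mul_nonneg (mul_nonneg (ellc_nonneg n) (pow_nonneg ht0 n)) ((even_two_mul n).pow_nonneg _)
  have hpt : ∀ θ, h θ = ∑' n, F n θ := by
    intro θ
    have hu0 : 0 ≤ t * Real.sin θ ^ 2 := mul_nonneg ht0 (sq_nonneg _)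
    have hu1 : t * Real.sin θ ^ 2 < 1 := by nlinarith [Real.sin_sq_le_one θ]
    have hb := ellbinom hu0 hu1
    have : (fun n => ellc n * (t * Real.sin θ ^ 2) ^ n) = fun n => F n θ := by
      funext n
      rw [hFdef]
      simp only [mul_pow, ← pow_mul]
      ring
    rw [hhdef]
    simp only
    rw [← hb, this]
  have hFcont : ∀ n, Continuous (F n) := fun n =>
    continuous_const.mul (Real.continuous_sin.pow _)
  have hFint : ∀ n : ℕ, Integrable (F n) (volume.restrict s) := fun n =>
    ((hFcont n).integrableOn_Icc).mono_set Set.Ioo_subset_Icc_self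
  have hmom : ∀ n : ℕ, ∫ θ in s, Real.sin θ ^ (2*n) = π/2 * ellc n := by
    intro n
    rw [hsdef, ← MeasureTheory.integral_Ioc_eq_integral_Ioo,
      ← intervalIntegral.integral_of_le (by positivity : (0:ℝ) ≤ π/2)]
    exact sin_pow_half n
  have hFval : ∀ n : ℕ, ∫ θ in s, F n θ = ellc n * t^n * (π/2 * ellc n) := by
    intro n
    rw [hFdef]
    simp only
    rw [MeasureTheory.integral_const_mul, hmom n]
  have hFnormval : ∀ n : ℕ, (∫ θ in s, ‖F n θ‖) = ellc n * t^n * (π/2 * ellc n) := by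
    intro n
    rw [← hFval n]
    congr 1
    funext θ
    exact Real.norm_of_nonneg (hFnn n θ)
  have hFsum : Summable (fun n => ∫ θ in s, ‖F n θ‖) := by
    simp_rw [hFnormval]
    apply Summable.of_nonneg_of_le
      (fun n => by
        have := ellc_nonneg n
        have := pow_nonneg ht0 n
        positivity)
      (fun n => ?_)
      ((summable_geometric_of_lt_one ht0 ht1).mul_left (π/2))
    have h1 := ellc_nonneg n
    have h2 := ellc_le_one n
    have h3 := pow_nonneg ht0 n
    have h4 : ellc n * ellc n ≤ 1 := by nlinarith
    calc ellc n * t^n * (π/2 * ellc n) = (π/2 * t^n) * (ellc n * ellc n) := by ring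
      _ ≤ (π/2 * t^n) * 1 := by
          apply mul_le_mul_of_nonneg_left h4
          positivity
      _ = π/2 * t^n := by ring
  have hswap := MeasureTheory.integral_tsum_of_summable_integral_norm hFint hFsum
  have hfin : ∫ θ in s, h θ = π/2 * ∑' n, ellc n ^ 2 * t ^ n := by
    have hps : (fun θ => h θ) = fun θ => ∑' n, F n θ := funext hpt
    calc ∫ θ in s, h θ = ∫ θ in s, ∑' n, F n θ := by rw [← hps]
      _ = ∑' n, ∫ θ in s, F n θ := hswap.symm
      _ = ∑' n, π/2 * (ellc n ^ 2 * t ^ n) := by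
          apply tsum_congr
          intro n
          rw [hFval n]
          ring
      _ = π/2 * ∑' n, ellc n ^ 2 * t ^ n := tsum_mul_left
  rw [hchg, hfin]
  congr 1
  apply tsum_congr
  intro n
  rw [ellc_eq n]
end
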